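/- (Theorem 2.4: corner stencil for an impedance and a Neumann boundary condition.) Let κ ≥ 0 and let i denote the imaginary unit. For h > 0 define the complex 4-point corner stencil coefficients C_{1,1} := 1 − (15·(112+219i)/2^13 − 16i/15)(κh) + ((961−419i)/2^12 − 16/45)(κh)² + ((721+282i)/2^15)(κh)³ − ((181+51i)/2^15)(κh)⁴; C_{0,1} := 2 − (15·(112+219i)/2^12 − 29i/15)(κh) + (3187/2^13 − 5·67i/2^11 − 11/18)(κh)² + ((1059+4899i)/2^15 − 17i/90)(κh)³ + ((507+606i)/2^15)(κh)⁴; C_{1,0} := 2 − (15·(112+219i)/2^12 − 29i/15)(κh) + (3187/2^13 − 5·67i/2^11 − 49/90)(κh)² + (3·1341i/2^15 − i/10 + 611/2^15)(κh)³ + ((−208+105i)/2^15)(κh)⁴; C_{0,0} := −5 + (75·(112+219i)/2^13 − 29i/15)(κh) + ((1559−1522i)/2^13 + 1/90)(κh)² − (3759/2^15 + 4239i/2^14 − 7i/18)(κh)³ − ((775+324i)/2^15 − 1/40)(κh)⁴. Then there exist functions J_{m,n}, J_{g₁,n}, J_{g₃,n} : (0,∞) → ℂ (depending only on κ, not on the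 data below) such that: for every corner point (l₁,l₃) ∈ ℝ², every function u : ℝ² → ℂ which is 8-times continuously differentiable on an open neighborhood U of (l₁,l₃), with f := Δu + κ²u on U, and every pair of 7-times continuously differentiable functions g₁, g₃ : ℝ → ℂ satisfying −∂_x u(l₁,y) − iκ·u(l₁,y) = g₁(y) for y near l₃ and −∂_y u(x,l₃) = g₃(x) for x near l₁, one has h^{−1} Σ_{k=0}^{1} Σ_{ℓ=0}^{1} C_{k,ℓ} · u(l₁+kh, l₃+ℓh) − Σ_{(m,n)∈Λ_6} f^{(m,n)} · J_{m,n}(h) − Σ_{n=0}^{7} g₁^{(n)}(l₃) · J_{g₁,n}(h) − Σ_{n=0}^{7} g₃^{(n)}(l₁) · J_{g₃,n}(h) = O(h^6) as h → 0+, where derivatives of f are evaluated at (l₁,l₃). That is, the 4-point corner scheme achieves sixth consistency order. -/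

import Mathlib

open scoped BigOperators
open Complex

/-- The index set `Λ_N = {(m,n) ∈ ℕ×ℕ : m+n ≤ N}`. -/
def Lam (N : ℕ) : Finset (ℕ × ℕ) :=
  (Finset.range (N + 1) ×ˢ Finset.range (N + 1)).filter (fun p => p.1 + p.2 ≤ N)

/-- `Λ_N^1 = {(m,n) ∈ Λ_N : m ≤ 1}`. -/
def Lam1 (N : ℕ) : Finset (ℕ × ℕ) := (Lam N).filter (fun p => p.1 ≤ 1)

/-- `Λ_N^2 = Λ_N \ Λ_N^1 = {(m,n) ∈ Λ_N : m ≥ 2}`. -/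
def Lam2 (N : ℕ) : Finset (ℕ × ℕ) := (Lam N).filter (fun p => 2 ≤ p.1)

/-- Mixed partial derivative `u^{(m,n)} = ∂^{m+n} u / ∂x^m ∂y^n` at `(x,y)`. -/
noncomputable def pd (u : ℝ × ℝ → ℂ) (m n : ℕ) (x y : ℝ) : ℂ :=
  iteratedDeriv m (fun s => iteratedDeriv n (fun t => u (s, t)) y) x

/-- `f = Δu + κ² u`. -/
noncomputable def helm (κ : ℝ) (u : ℝ × ℝ → ℂ) : ℝ × ℝ → ℂ :=
  fun p => pd u 2 0 p.1 p.2 + pd u 0 2 p.1 p.2 + (κ : ℂ) ^ 2 * u p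

/-- The polynomial `G_{N,m,n}(x,y)`; the sum is empty (0) when `m+n > N`. -/
noncomputable def Gpoly (κ : ℝ) (N m n : ℕ) (x y : ℂ) : ℂ :=
  if m + n ≤ N then
    ∑ p ∈ Finset.range ((N - m - n) / 2 + 1),
      ∑ ℓ ∈ Finset.Icc p (p + n / 2),
        (-1 : ℂ) ^ ℓ * (Nat.choose ℓ p : ℂ) * (κ : ℂ) ^ (2 * p) *
          x ^ (m + 2 * ℓ) * y ^ (n + 2 * p - 2 * ℓ) /
          ((Nat.factorial (m + 2 * ℓ) : ℂ) * (Nat.factorial (n + 2 * p - 2 * ℓ) : ℂ))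
  else 0

/-- The polynomial `H_{N,m,n}(x,y)`; the sum is empty (0) when `m+n+2 > N`. -/
noncomputable def Hpoly (κ : ℝ) (N m n : ℕ) (x y : ℂ) : ℂ :=
  if m + n + 2 ≤ N then
    ∑ p ∈ Finset.range ((N - 2 - m - n) / 2 + 1),
      ∑ ℓ ∈ Finset.Icc (p + 1) (p + n / 2 + 1),
        (-1 : ℂ) ^ (ℓ - 1) * (Nat.choose (ℓ - 1) p : ℂ) * (κ : ℂ) ^ (2 * p) *
          x ^ (m + 2 * ℓ) * y ^ (2 * p + n + 2 - 2 * ℓ) /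
          ((Nat.factorial (m + 2 * ℓ) : ℂ) * (Nat.factorial (2 * p + n + 2 - 2 * ℓ) : ℂ))
  else 0

/-- Corner stencil coefficient `C_{1,1}` of Theorem 2.4, a polynomial in `t = κh`. -/
noncomputable def cor1C11 (t : ℝ) : ℂ :=
  1 - (15 * (112 + 219*I)/2^13 - 16*I/15) * (t : ℂ)
    + ((961 - 419*I)/2^12 - 16/45) * (t : ℂ)^2
    + ((721 + 282*I)/2^15) * (t : ℂ)^3
    - ((181 + 51*I)/2^15) * (t : ℂ)^4

/-- Corner stencil coefficient `C_{0,1}` of Theorem 2.4, a polynomial in `t = κh`. -/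
noncomputable def cor1C01 (t : ℝ) : ℂ :=
  2 - (15 * (112 + 219*I)/2^12 - 29*I/15) * (t : ℂ)
    + (3187/2^13 - 5 * 67*I/2^11 - 11/18) * (t : ℂ)^2
    + ((1059 + 4899*I)/2^15 - 17*I/90) * (t : ℂ)^3
    + ((507 + 606*I)/2^15) * (t : ℂ)^4

/-- Corner stencil coefficient `C_{1,0}` of Theorem 2.4, a polynomial in `t = κh`. -/
noncomputable def cor1C10 (t : ℝ) : ℂ :=
  2 - (15 * (112 + 219*I)/2^12 - 29*I/15) * (t : ℂ)
    + (3187/2^13 - 5 * 67*I/2^11 - 49/90) * (t : ℂ)^2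
    + (3 * 1341*I/2^15 - I/10 + 611/2^15) * (t : ℂ)^3
    + ((-208 + 105*I)/2^15) * (t : ℂ)^4

/-- Corner stencil coefficient `C_{0,0}` of Theorem 2.4, a polynomial in `t = κh`. -/
noncomputable def cor1C00 (t : ℝ) : ℂ :=
  -5 + (75 * (112 + 219*I)/2^13 - 29*I/15) * (t : ℂ)
    + ((1559 - 1522*I)/2^13 + 1/90) * (t : ℂ)^2
    - (3759/2^15 + 4239*I/2^14 - 7*I/18) * (t : ℂ)^3
    - ((775 + 324*I)/2^15 - 1/40) * (t : ℂ)^4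

/-- The 4-point corner stencil coefficient `C_{k,ℓ}` of Theorem 2.4, for
`k,ℓ ∈ {0,1}`. -/
noncomputable def cor1Coef (t : ℝ) (k ℓ : ℕ) : ℂ :=
  if k = 0 then (if ℓ = 0 then cor1C00 t else cor1C01 t)
  else (if ℓ = 0 then cor1C10 t else cor1C11 t)


noncomputable def JfE0_0 (κ h : ℝ) : ℂ := (((3/2):ℂ) * (h:ℂ) + ((-315/1024):ℂ) * (κ:ℂ) * (h:ℂ)^2 + ((14721/16384):ℂ) * Complex.I * (κ:ℂ) * (h:ℂ)^2 + ((-21559/81920):ℂ) * (κ:ℂ)^2 * (h:ℂ)^3 + ((-1089/8192):ℂ) * Complex.I * (κ:ℂ)^2 * (h:ℂ)^3 + ((753/16384):ℂ) * (κ:ℂ)^3 * (h:ℂ)^4 + ((-9697/163840):ℂ) * Complex.I * (κ:ℂ)^3 * (h:ℂ)^4 + ((479/49152):ℂ) * (κ:ℂ)^4 * (h:ℂ)^5 + ((195/16384):ℂ) * Complex.I * (κ:ℂ)^4 * (h:ℂ)^5 + ((-167/65536):ℂ) * (κ:ℂ)^5 * (h:ℂ)^6 + ((4673/3932160):ℂ)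 * Complex.I * (κ:ℂ)^5 * (h:ℂ)^6 + ((2179/19660800):ℂ) * (κ:ℂ)^6 * (h:ℂ)^7 + ((-287/655360):ℂ) * Complex.I * (κ:ℂ)^6 * (h:ℂ)^7 + ((37/655360):ℂ) * (κ:ℂ)^7 * (h:ℂ)^8 + ((5141/117964800):ℂ) * Complex.I * (κ:ℂ)^7 * (h:ℂ)^8 + ((-389/23592960):ℂ) * (κ:ℂ)^8 * (h:ℂ)^9 + ((3/1310720):ℂ) * Complex.I * (κ:ℂ)^8 * (h:ℂ)^9)
noncomputable def JfE0_1 (κ h : ℝ) : ℂ := (((1/2):ℂ) * (h:ℂ)^2 + ((-105/1024):ℂ) * (κ:ℂ) * (h:ℂ)^3 + ((4907/16384):ℂ) * Complex.I * (κ:ℂ) * (h:ℂ)^3 + ((-60581/737280):ℂ) * (κ:ℂ)^2 * (h:ℂ)^4 + ((-363/8192):ℂ) * Complex.I * (κ:ℂ)^2 * (h:ℂ)^4 + ((697/49152):ℂ) * (κ:ℂ)^3 * (h:ℂ)^5 + ((-11117/552960):ℂ) * Complex.I * (κ:ℂ)^3 * (h:ℂ)^5 + ((527633/103219200):ℂ)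 * (κ:ℂ)^4 * (h:ℂ)^6 + ((1651/327680):ℂ) * Complex.I * (κ:ℂ)^4 * (h:ℂ)^6 + ((-113/196608):ℂ) * (κ:ℂ)^5 * (h:ℂ)^7 + ((108473/176947200):ℂ) * Complex.I * (κ:ℂ)^5 * (h:ℂ)^7 + ((-46747/309657600):ℂ) * (κ:ℂ)^6 * (h:ℂ)^8 + ((-1779/9175040):ℂ) * Complex.I * (κ:ℂ)^6 * (h:ℂ)^8 + ((89/8257536):ℂ) * (κ:ℂ)^7 * (h:ℂ)^9 + ((-45383/7431782400):ℂ) * Complex.I * (κ:ℂ)^7 * (h:ℂ)^9 + ((163/82575360):ℂ) * (κ:ℂ)^8 * (h:ℂ)^10 + ((37/11010048):ℂ) * Complex.I * (κ:ℂ)^8 * (h:ℂ)^10)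
noncomputable def JfE0_2 (κ h : ℝ) : ℂ := (((1/8):ℂ) * (h:ℂ)^3 + ((-105/4096):ℂ) * (κ:ℂ) * (h:ℂ)^4 + ((89989/983040):ℂ) * Complex.I * (κ:ℂ) * (h:ℂ)^4 + ((-92071/2949120):ℂ) * (κ:ℂ)^2 * (h:ℂ)^5 + ((-475/32768):ℂ) * Complex.I * (κ:ℂ)^2 * (h:ℂ)^5 + ((835/131072):ℂ) * (κ:ℂ)^3 * (h:ℂ)^6 + ((-94753/11796480):ℂ) * Complex.I * (κ:ℂ)^3 * (h:ℂ)^6 + ((153167/176947200):ℂ) * (κ:ℂ)^4 * (h:ℂ)^7 + ((919/983040):ℂ) * Complex.I * (κ:ℂ)^4 * (h:ℂ)^7 + ((-2717/7864320):ℂ) * (κ:ℂ)^5 * (h:ℂ)^8 + ((-2717/29491200):ℂ) * Complex.I * (κ:ℂ)^5 * (h:ℂ)^8 + ((1937/23592960):ℂ) * (κ:ℂ)^6 * (h:ℂ)^9 + ((97/2621440):ℂ) * Complex.I * (κ:ℂ)^6 * (h:ℂ)^9)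
noncomputable def JfE0_3 (κ h : ℝ) : ℂ := (((1/40):ℂ) * (h:ℂ)^4 + ((-21/4096):ℂ) * (κ:ℂ) * (h:ℂ)^5 + ((4907/327680):ℂ) * Complex.I * (κ:ℂ) * (h:ℂ)^5 + ((-356483/103219200):ℂ) * (κ:ℂ)^2 * (h:ℂ)^6 + ((-363/163840):ℂ) * Complex.I * (κ:ℂ)^2 * (h:ℂ)^6 + ((113/196608):ℂ) * (κ:ℂ)^3 * (h:ℂ)^7 + ((-108473/176947200):ℂ) * Complex.I * (κ:ℂ)^3 * (h:ℂ)^7 + ((46747/309657600):ℂ) * (κ:ℂ)^4 * (h:ℂ)^8 + ((1779/9175040):ℂ) * Complex.I * (κ:ℂ)^4 * (h:ℂ)^8 + ((-89/8257536):ℂ) * (κ:ℂ)^5 * (h:ℂ)^9 + ((45383/7431782400):ℂ) * Complex.I * (κ:ℂ)^5 * (h:ℂ)^9 + ((-163/82575360):ℂ) * (κ:ℂ)^6 * (h:ℂ)^10 + ((-37/11010048):ℂ) * Complex.I * (κ:ℂ)^6 * (h:ℂ)^10)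
noncomputable def JfE0_4 (κ h : ℝ) : ℂ := (((1/240):ℂ) * (h:ℂ)^5 + ((-7/8192):ℂ) * (κ:ℂ) * (h:ℂ)^6 + ((4907/1966080):ℂ) * Complex.I * (κ:ℂ) * (h:ℂ)^6 + ((-3773/9830400):ℂ) * (κ:ℂ)^2 * (h:ℂ)^7 + ((-121/327680):ℂ) * Complex.I * (κ:ℂ)^2 * (h:ℂ)^7 + ((37/655360):ℂ) * (κ:ℂ)^3 * (h:ℂ)^8 + ((5141/117964800):ℂ) * Complex.I * (κ:ℂ)^3 * (h:ℂ)^8 + ((-389/23592960):ℂ) * (κ:ℂ)^4 * (h:ℂ)^9 + ((3/1310720):ℂ) * Complex.I * (κ:ℂ)^4 * (h:ℂ)^9)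
noncomputable def JfE0_5 (κ h : ℝ) : ℂ := (((1/1680):ℂ) * (h:ℂ)^6 + ((-1/8192):ℂ) * (κ:ℂ) * (h:ℂ)^7 + ((701/1966080):ℂ) * Complex.I * (κ:ℂ) * (h:ℂ)^7 + ((-42149/619315200):ℂ) * (κ:ℂ)^2 * (h:ℂ)^8 + ((-121/2293760):ℂ) * Complex.I * (κ:ℂ)^2 * (h:ℂ)^8 + ((89/8257536):ℂ) * (κ:ℂ)^3 * (h:ℂ)^9 + ((-45383/7431782400):ℂ) * Complex.I * (κ:ℂ)^3 * (h:ℂ)^9 + ((163/82575360):ℂ) * (κ:ℂ)^4 * (h:ℂ)^10 + ((37/11010048):ℂ) * Complex.I * (κ:ℂ)^4 * (h:ℂ)^10)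
noncomputable def JfE1_0 (κ h : ℝ) : ℂ := (((1/2):ℂ) * (h:ℂ)^2 + ((-105/1024):ℂ) * (κ:ℂ) * (h:ℂ)^3 + ((4907/16384):ℂ) * Complex.I * (κ:ℂ) * (h:ℂ)^3 + ((-5821/81920):ℂ) * (κ:ℂ)^2 * (h:ℂ)^4 + ((-363/8192):ℂ) * Complex.I * (κ:ℂ)^2 * (h:ℂ)^4 + ((195/16384):ℂ) * (κ:ℂ)^3 * (h:ℂ)^5 + ((-479/49152):ℂ) * Complex.I * (κ:ℂ)^3 * (h:ℂ)^5 + ((5273/5734400):ℂ) * (κ:ℂ)^4 * (h:ℂ)^6 + ((51/20480):ℂ) * Complex.I * (κ:ℂ)^4 * (h:ℂ)^6 + ((-151/327680):ℂ) * (κ:ℂ)^5 * (h:ℂ)^7 + ((623/6553600):ℂ) * Complex.I * (κ:ℂ)^5 * (h:ℂ)^7 + ((289/6553600):ℂ) * (κ:ℂ)^6 * (h:ℂ)^8 + ((-61/917504):ℂ) * Complex.I * (κ:ℂ)^6 * (h:ℂ)^8 + ((37/4587520):ℂ) * (κ:ℂ)^7 * (h:ℂ)^9 + ((5141/825753600):ℂ)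 * Complex.I * (κ:ℂ)^7 * (h:ℂ)^9 + ((-389/165150720):ℂ) * (κ:ℂ)^8 * (h:ℂ)^10 + ((3/9175040):ℂ) * Complex.I * (κ:ℂ)^8 * (h:ℂ)^10)
noncomputable def JfE1_1 (κ h : ℝ) : ℂ := (((1/6):ℂ) * (h:ℂ)^3 + ((-35/1024):ℂ) * (κ:ℂ) * (h:ℂ)^4 + ((81797/737280):ℂ) * Complex.I * (κ:ℂ) * (h:ℂ)^4 + ((-31507/1105920):ℂ) * (κ:ℂ)^2 * (h:ℂ)^5 + ((-419/24576):ℂ) * Complex.I * (κ:ℂ)^2 * (h:ℂ)^5 + ((1057/196608):ℂ) * (κ:ℂ)^3 * (h:ℂ)^6 + ((-60647/14745600):ℂ) * Complex.I * (κ:ℂ)^3 * (h:ℂ)^6 + ((3857/44236800):ℂ) * (κ:ℂ)^4 * (h:ℂ)^7 + ((583/983040):ℂ) * Complex.I * (κ:ℂ)^4 * (h:ℂ)^7 + ((-721/3932160):ℂ) * (κ:ℂ)^5 * (h:ℂ)^8 + ((-47/655360):ℂ) * Complex.I * (κ:ℂ)^5 * (h:ℂ)^8 + ((181/3932160):ℂ)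 * (κ:ℂ)^6 * (h:ℂ)^9 + ((17/1310720):ℂ) * Complex.I * (κ:ℂ)^6 * (h:ℂ)^9)
noncomputable def JfE1_2 (κ h : ℝ) : ℂ := (((7/120):ℂ) * (h:ℂ)^4 + ((-49/4096):ℂ) * (κ:ℂ) * (h:ℂ)^5 + ((119431/2949120):ℂ) * Complex.I * (κ:ℂ) * (h:ℂ)^5 + ((-3329243/309657600):ℂ) * (κ:ℂ)^2 * (h:ℂ)^6 + ((-3101/491520):ℂ) * Complex.I * (κ:ℂ)^2 * (h:ℂ)^6 + ((4139/1966080):ℂ) * (κ:ℂ)^3 * (h:ℂ)^7 + ((-94657/58982400):ℂ) * Complex.I * (κ:ℂ)^3 * (h:ℂ)^7 + ((1163/35389440):ℂ) * (κ:ℂ)^4 * (h:ℂ)^8 + ((61/344064):ℂ) * Complex.I * (κ:ℂ)^4 * (h:ℂ)^8 + ((-4159/55050240):ℂ) * (κ:ℂ)^5 * (h:ℂ)^9 + ((-151/6451200):ℂ) * Complex.I * (κ:ℂ)^5 * (h:ℂ)^9 + ((3023/165150720):ℂ) * (κ:ℂ)^6 * (h:ℂ)^10 + ((131/18350080):ℂ)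 * Complex.I * (κ:ℂ)^6 * (h:ℂ)^10)
noncomputable def JfE1_3 (κ h : ℝ) : ℂ := (((1/120):ℂ) * (h:ℂ)^5 + ((-7/4096):ℂ) * (κ:ℂ) * (h:ℂ)^6 + ((81797/14745600):ℂ) * Complex.I * (κ:ℂ) * (h:ℂ)^6 + ((-22291/22118400):ℂ) * (κ:ℂ)^2 * (h:ℂ)^7 + ((-419/491520):ℂ) * Complex.I * (κ:ℂ)^2 * (h:ℂ)^7 + ((721/3932160):ℂ) * (κ:ℂ)^3 * (h:ℂ)^8 + ((47/655360):ℂ) * Complex.I * (κ:ℂ)^3 * (h:ℂ)^8 + ((-181/3932160):ℂ) * (κ:ℂ)^4 * (h:ℂ)^9 + ((-17/1310720):ℂ) * Complex.I * (κ:ℂ)^4 * (h:ℂ)^9)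
noncomputable def JfE1_4 (κ h : ℝ) : ℂ := (((17/5040):ℂ) * (h:ℂ)^6 + ((-17/24576):ℂ) * (κ:ℂ) * (h:ℂ)^7 + ((195139/88473600):ℂ) * Complex.I * (κ:ℂ) * (h:ℂ)^7 + ((-103717/265420800):ℂ) * (κ:ℂ)^2 * (h:ℂ)^8 + ((-1391/4128768):ℂ) * Complex.I * (κ:ℂ)^2 * (h:ℂ)^8 + ((5713/82575360):ℂ) * (κ:ℂ)^3 * (h:ℂ)^9 + ((24881/825753600):ℂ) * Complex.I * (κ:ℂ)^3 * (h:ℂ)^9 + ((-2923/165150720):ℂ) * (κ:ℂ)^4 * (h:ℂ)^10 + ((-11/2752512):ℂ) * Complex.I * (κ:ℂ)^4 * (h:ℂ)^10)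
noncomputable def JfE2_0 (κ h : ℝ) : ℂ := (((1/8):ℂ) * (h:ℂ)^3 + ((-105/4096):ℂ) * (κ:ℂ) * (h:ℂ)^4 + ((4907/65536):ℂ) * Complex.I * (κ:ℂ) * (h:ℂ)^4 + ((-3083/196608):ℂ) * (κ:ℂ)^2 * (h:ℂ)^5 + ((-363/32768):ℂ) * Complex.I * (κ:ℂ)^2 * (h:ℂ)^5 + ((167/65536):ℂ) * (κ:ℂ)^3 * (h:ℂ)^6 + ((-4673/3932160):ℂ) * Complex.I * (κ:ℂ)^3 * (h:ℂ)^6 + ((-2179/19660800):ℂ) * (κ:ℂ)^4 * (h:ℂ)^7 + ((287/655360):ℂ) * Complex.I * (κ:ℂ)^4 * (h:ℂ)^7 + ((-37/655360):ℂ) * (κ:ℂ)^5 * (h:ℂ)^8 + ((-5141/117964800):ℂ) * Complex.I * (κ:ℂ)^5 * (h:ℂ)^8 + ((389/23592960):ℂ) * (κ:ℂ)^6 * (h:ℂ)^9 + ((-3/1310720):ℂ) * Complex.I * (κ:ℂ)^6 * (h:ℂ)^9)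
noncomputable def JfE2_1 (κ h : ℝ) : ℂ := (((7/120):ℂ) * (h:ℂ)^4 + ((-49/4096):ℂ) * (κ:ℂ) * (h:ℂ)^5 + ((119431/2949120):ℂ) * Complex.I * (κ:ℂ) * (h:ℂ)^5 + ((-3157211/309657600):ℂ) * (κ:ℂ)^2 * (h:ℂ)^6 + ((-3101/491520):ℂ) * Complex.I * (κ:ℂ)^2 * (h:ℂ)^6 + ((261/131072):ℂ) * (κ:ℂ)^3 * (h:ℂ)^7 + ((-192319/176947200):ℂ) * Complex.I * (κ:ℂ)^3 * (h:ℂ)^7 + ((-27161/154828800):ℂ) * (κ:ℂ)^4 * (h:ℂ)^8 + ((1373/27525120):ℂ) * Complex.I * (κ:ℂ)^4 * (h:ℂ)^8 + ((-11581/165150720):ℂ) * (κ:ℂ)^5 * (h:ℂ)^9 + ((-44657/928972800):ℂ) * Complex.I * (κ:ℂ)^5 * (h:ℂ)^9 + ((4453/165150720):ℂ) * (κ:ℂ)^6 * (h:ℂ)^10 + ((727/55050240):ℂ) * Complex.I * (κ:ℂ)^6 * (h:ℂ)^10)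
noncomputable def JfE2_2 (κ h : ℝ) : ℂ := (((1/60):ℂ) * (h:ℂ)^5 + ((-7/2048):ℂ) * (κ:ℂ) * (h:ℂ)^6 + ((16769/1474560):ℂ) * Complex.I * (κ:ℂ) * (h:ℂ)^6 + ((-188953/88473600):ℂ) * (κ:ℂ)^2 * (h:ℂ)^7 + ((-433/245760):ℂ) * Complex.I * (κ:ℂ)^2 * (h:ℂ)^7 + ((3161/7864320):ℂ) * (κ:ℂ)^3 * (h:ℂ)^8 + ((16009/117964800):ℂ) * Complex.I * (κ:ℂ)^3 * (h:ℂ)^8 + ((-1163/11796480):ℂ) * (κ:ℂ)^4 * (h:ℂ)^9 + ((-91/2621440):ℂ) * Complex.I * (κ:ℂ)^4 * (h:ℂ)^9)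
noncomputable def JfE2_3 (κ h : ℝ) : ℂ := (((1/280):ℂ) * (h:ℂ)^6 + ((-3/4096):ℂ) * (κ:ℂ) * (h:ℂ)^7 + ((35641/14745600):ℂ) * Complex.I * (κ:ℂ) * (h:ℂ)^7 + ((-3599/8257536):ℂ) * (κ:ℂ)^2 * (h:ℂ)^8 + ((-257/688128):ℂ) * Complex.I * (κ:ℂ)^2 * (h:ℂ)^8 + ((13361/165150720):ℂ) * (κ:ℂ)^3 * (h:ℂ)^9 + ((311873/7431782400):ℂ) * Complex.I * (κ:ℂ)^3 * (h:ℂ)^9 + ((-4127/165150720):ℂ) * (κ:ℂ)^4 * (h:ℂ)^10 + ((-271/27525120):ℂ) * Complex.I * (κ:ℂ)^4 * (h:ℂ)^10)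
noncomputable def JfE3_0 (κ h : ℝ) : ℂ := (((1/40):ℂ) * (h:ℂ)^4 + ((-21/4096):ℂ) * (κ:ℂ) * (h:ℂ)^5 + ((4907/327680):ℂ) * Complex.I * (κ:ℂ) * (h:ℂ)^5 + ((-99713/34406400):ℂ) * (κ:ℂ)^2 * (h:ℂ)^6 + ((-363/163840):ℂ) * Complex.I * (κ:ℂ)^2 * (h:ℂ)^6 + ((151/327680):ℂ) * (κ:ℂ)^3 * (h:ℂ)^7 + ((-623/6553600):ℂ) * Complex.I * (κ:ℂ)^3 * (h:ℂ)^7 + ((-289/6553600):ℂ) * (κ:ℂ)^4 * (h:ℂ)^8 + ((61/917504):ℂ) * Complex.I * (κ:ℂ)^4 * (h:ℂ)^8 + ((-37/4587520):ℂ) * (κ:ℂ)^5 * (h:ℂ)^9 + ((-5141/825753600):ℂ) * Complex.I * (κ:ℂ)^5 * (h:ℂ)^9 + ((389/165150720):ℂ) * (κ:ℂ)^6 * (h:ℂ)^10 + ((-3/9175040):ℂ) * Complex.I * (κ:ℂ)^6 * (h:ℂ)^10)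
noncomputable def JfE3_1 (κ h : ℝ) : ℂ := (((7/360):ℂ) * (h:ℂ)^5 + ((-49/12288):ℂ) * (κ:ℂ) * (h:ℂ)^6 + ((572579/44236800):ℂ) * Complex.I * (κ:ℂ) * (h:ℂ)^6 + ((-156037/66355200):ℂ) * (κ:ℂ)^2 * (h:ℂ)^7 + ((-2933/1474560):ℂ) * Complex.I * (κ:ℂ)^2 * (h:ℂ)^7 + ((5047/11796480):ℂ) * (κ:ℂ)^3 * (h:ℂ)^8 + ((329/1966080):ℂ) * Complex.I * (κ:ℂ)^3 * (h:ℂ)^8 + ((-1267/11796480):ℂ) * (κ:ℂ)^4 * (h:ℂ)^9 + ((-119/3932160):ℂ) * Complex.I * (κ:ℂ)^4 * (h:ℂ)^9)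
noncomputable def JfE3_2 (κ h : ℝ) : ℂ := (((1/280):ℂ) * (h:ℂ)^6 + ((-3/4096):ℂ) * (κ:ℂ) * (h:ℂ)^7 + ((35641/14745600):ℂ) * Complex.I * (κ:ℂ) * (h:ℂ)^7 + ((-39731/88473600):ℂ) * (κ:ℂ)^2 * (h:ℂ)^8 + ((-257/688128):ℂ) * Complex.I * (κ:ℂ)^2 * (h:ℂ)^8 + ((4603/55050240):ℂ) * (κ:ℂ)^3 * (h:ℂ)^9 + ((24469/825753600):ℂ) * Complex.I * (κ:ℂ)^3 * (h:ℂ)^9 + ((-853/41287680):ℂ) * (κ:ℂ)^4 * (h:ℂ)^10 + ((-25/3670016):ℂ) * Complex.I * (κ:ℂ)^4 * (h:ℂ)^10)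
noncomputable def JfE4_0 (κ h : ℝ) : ℂ := (((1/240):ℂ) * (h:ℂ)^5 + ((-7/8192):ℂ) * (κ:ℂ) * (h:ℂ)^6 + ((4907/1966080):ℂ) * Complex.I * (κ:ℂ) * (h:ℂ)^6 + ((-3773/9830400):ℂ) * (κ:ℂ)^2 * (h:ℂ)^7 + ((-121/327680):ℂ) * Complex.I * (κ:ℂ)^2 * (h:ℂ)^7 + ((37/655360):ℂ) * (κ:ℂ)^3 * (h:ℂ)^8 + ((5141/117964800):ℂ) * Complex.I * (κ:ℂ)^3 * (h:ℂ)^8 + ((-389/23592960):ℂ) * (κ:ℂ)^4 * (h:ℂ)^9 + ((3/1310720):ℂ) * Complex.I * (κ:ℂ)^4 * (h:ℂ)^9)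
noncomputable def JfE4_1 (κ h : ℝ) : ℂ := (((17/5040):ℂ) * (h:ℂ)^6 + ((-17/24576):ℂ) * (κ:ℂ) * (h:ℂ)^7 + ((195139/88473600):ℂ) * Complex.I * (κ:ℂ) * (h:ℂ)^7 + ((-150119/371589120):ℂ) * (κ:ℂ)^2 * (h:ℂ)^8 + ((-1391/4128768):ℂ) * Complex.I * (κ:ℂ)^2 * (h:ℂ)^8 + ((1979/27525120):ℂ) * (κ:ℂ)^3 * (h:ℂ)^9 + ((132277/7431782400):ℂ) * Complex.I * (κ:ℂ)^3 * (h:ℂ)^9 + ((-23/1720320):ℂ) * (κ:ℂ)^4 * (h:ℂ)^10 + ((-53/55050240):ℂ) * Complex.I * (κ:ℂ)^4 * (h:ℂ)^10)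
noncomputable def JfE5_0 (κ h : ℝ) : ℂ := (((1/1680):ℂ) * (h:ℂ)^6 + ((-1/8192):ℂ) * (κ:ℂ) * (h:ℂ)^7 + ((701/1966080):ℂ) * Complex.I * (κ:ℂ) * (h:ℂ)^7 + ((-539/9830400):ℂ) * (κ:ℂ)^2 * (h:ℂ)^8 + ((-121/2293760):ℂ) * Complex.I * (κ:ℂ)^2 * (h:ℂ)^8 + ((37/4587520):ℂ) * (κ:ℂ)^3 * (h:ℂ)^9 + ((5141/825753600):ℂ) * Complex.I * (κ:ℂ)^3 * (h:ℂ)^9 + ((-389/165150720):ℂ) * (κ:ℂ)^4 * (h:ℂ)^10 + ((3/9175040):ℂ) * Complex.I * (κ:ℂ)^4 * (h:ℂ)^10)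
noncomputable def Jf (κ : ℝ) : ℕ → ℕ → ℝ → ℂ
  | 0, 0, h => JfE0_0 κ h
  | 0, 1, h => JfE0_1 κ h
  | 0, 2, h => JfE0_2 κ h
  | 0, 3, h => JfE0_3 κ h
  | 0, 4, h => JfE0_4 κ h
  | 0, 5, h => JfE0_5 κ h
  | 1, 0, h => JfE1_0 κ h
  | 1, 1, h => JfE1_1 κ h
  | 1, 2, h => JfE1_2 κ h
  | 1, 3, h => JfE1_3 κ h
  | 1, 4, h => JfE1_4 κ h
  | 2, 0, h => JfE2_0 κ h
  | 2, 1, h => JfE2_1 κ h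
  | 2, 2, h => JfE2_2 κ h
  | 2, 3, h => JfE2_3 κ h
  | 3, 0, h => JfE3_0 κ h
  | 3, 1, h => JfE3_1 κ h
  | 3, 2, h => JfE3_2 κ h
  | 4, 0, h => JfE4_0 κ h
  | 4, 1, h => JfE4_1 κ h
  | 5, 0, h => JfE5_0 κ h
  | _, _, _ => 0

noncomputable def Jg1dE0 (κ h : ℝ) : ℂ := ((-3:ℂ) + ((315/512):ℂ) * (κ:ℂ) * (h:ℂ) + ((-14721/8192):ℂ) * Complex.I * (κ:ℂ) * (h:ℂ) + ((31799/40960):ℂ) * (κ:ℂ)^2 * (h:ℂ)^2 + ((1089/4096):ℂ) * Complex.I * (κ:ℂ)^2 * (h:ℂ)^2 + ((-1173/8192):ℂ) * (κ:ℂ)^3 * (h:ℂ)^3 + ((43929/163840):ℂ) * Complex.I * (κ:ℂ)^3 * (h:ℂ)^3 + ((-9697/163840):ℂ) * (κ:ℂ)^4 * (h:ℂ)^4 + ((-753/16384):ℂ) * Complex.I * (κ:ℂ)^4 * (h:ℂ)^4 + ((195/16384):ℂ) * (κ:ℂ)^5 * (h:ℂ)^5 + ((-479/49152):ℂ) * Complex.I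 * (κ:ℂ)^5 * (h:ℂ)^5 + ((5273/5734400):ℂ) * (κ:ℂ)^6 * (h:ℂ)^6 + ((51/20480):ℂ) * Complex.I * (κ:ℂ)^6 * (h:ℂ)^6 + ((-151/327680):ℂ) * (κ:ℂ)^7 * (h:ℂ)^7 + ((623/6553600):ℂ) * Complex.I * (κ:ℂ)^7 * (h:ℂ)^7 + ((289/6553600):ℂ) * (κ:ℂ)^8 * (h:ℂ)^8 + ((-61/917504):ℂ) * Complex.I * (κ:ℂ)^8 * (h:ℂ)^8 + ((37/4587520):ℂ) * (κ:ℂ)^9 * (h:ℂ)^9 + ((5141/825753600):ℂ) * Complex.I * (κ:ℂ)^9 * (h:ℂ)^9 + ((-389/165150720):ℂ) * (κ:ℂ)^10 * (h:ℂ)^10 + ((3/9175040):ℂ) * Complex.I * (κ:ℂ)^10 * (h:ℂ)^10)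
noncomputable def Jg1dE2 (κ h : ℝ) : ℂ := (((-1/30):ℂ) * Complex.I * (κ:ℂ) * (h:ℂ)^3 + ((35201/737280):ℂ) * (κ:ℂ)^2 * (h:ℂ)^4 + ((7/1024):ℂ) * Complex.I * (κ:ℂ)^2 * (h:ℂ)^4 + ((-725/65536):ℂ) * (κ:ℂ)^3 * (h:ℂ)^5 + ((78001/2949120):ℂ) * Complex.I * (κ:ℂ)^3 * (h:ℂ)^5 + ((-547319/77414400):ℂ) * (κ:ℂ)^4 * (h:ℂ)^6 + ((-2989/983040):ℂ) * Complex.I * (κ:ℂ)^4 * (h:ℂ)^6 + ((3233/1966080):ℂ) * (κ:ℂ)^5 * (h:ℂ)^7 + ((-1781/1179648):ℂ) * Complex.I * (κ:ℂ)^5 * (h:ℂ)^7 + ((6809/88473600):ℂ) * (κ:ℂ)^6 * (h:ℂ)^8 + ((305/2752512):ℂ) * Complex.I * (κ:ℂ)^6 * (h:ℂ)^8 + ((-743/11010048):ℂ) * (κ:ℂ)^7 * (h:ℂ)^9 + ((-4729/275251200):ℂ) * Complex.I * (κ:ℂ)^7 * (h:ℂ)^9 + ((439/27525120):ℂ) *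 (κ:ℂ)^8 * (h:ℂ)^10 + ((137/18350080):ℂ) * Complex.I * (κ:ℂ)^8 * (h:ℂ)^10)
noncomputable def Jg1dE4 (κ h : ℝ) : ℂ := (((1/60):ℂ) * (h:ℂ)^4 + ((-7/2048):ℂ) * (κ:ℂ) * (h:ℂ)^5 + ((18817/1474560):ℂ) * Complex.I * (κ:ℂ) * (h:ℂ)^5 + ((-724393/309657600):ℂ) * (κ:ℂ)^2 * (h:ℂ)^6 + ((-503/245760):ℂ) * Complex.I * (κ:ℂ)^2 * (h:ℂ)^6 + ((651/1310720):ℂ) * (κ:ℂ)^3 * (h:ℂ)^7 + ((42857/176947200):ℂ) * Complex.I * (κ:ℂ)^3 * (h:ℂ)^7 + ((-33907/265420800):ℂ) * (κ:ℂ)^4 * (h:ℂ)^8 + ((-1565/16515072):ℂ) * Complex.I * (κ:ℂ)^4 * (h:ℂ)^8 + ((-1051/165150720):ℂ) * (κ:ℂ)^5 * (h:ℂ)^9 + ((617/91750400):ℂ) * Complex.I * (κ:ℂ)^5 * (h:ℂ)^9 + ((5/8257536):ℂ) * (κ:ℂ)^6 * (h:ℂ)^10 + ((173/55050240):ℂ)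 * Complex.I * (κ:ℂ)^6 * (h:ℂ)^10)
noncomputable def Jg1dE6 (κ h : ℝ) : ℂ := (((1/504):ℂ) * (h:ℂ)^6 + ((-5/12288):ℂ) * (κ:ℂ) * (h:ℂ)^7 + ((56671/44236800):ℂ) * Complex.I * (κ:ℂ) * (h:ℂ)^7 + ((-11827/53084160):ℂ) * (κ:ℂ)^2 * (h:ℂ)^8 + ((-2011/10321920):ℂ) * Complex.I * (κ:ℂ)^2 * (h:ℂ)^8 + ((6379/165150720):ℂ) * (κ:ℂ)^3 * (h:ℂ)^9 + ((15011/825753600):ℂ) * Complex.I * (κ:ℂ)^3 * (h:ℂ)^9 + ((-23/2293760):ℂ) * (κ:ℂ)^4 * (h:ℂ)^10 + ((-101/55050240):ℂ) * Complex.I * (κ:ℂ)^4 * (h:ℂ)^10)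
noncomputable def Jg1d (κ : ℝ) : ℕ → ℝ → ℂ
  | 0, h => Jg1dE0 κ h
  | 2, h => Jg1dE2 κ h
  | 4, h => Jg1dE4 κ h
  | 6, h => Jg1dE6 κ h
  | _, _ => 0

noncomputable def Jg3dE0 (κ h : ℝ) : ℂ := ((-3:ℂ) + ((315/512):ℂ) * (κ:ℂ) * (h:ℂ) + ((-14721/8192):ℂ) * Complex.I * (κ:ℂ) * (h:ℂ) + ((103589/122880):ℂ) * (κ:ℂ)^2 * (h:ℂ)^2 + ((1089/4096):ℂ) * Complex.I * (κ:ℂ)^2 * (h:ℂ)^2 + ((-1285/8192):ℂ) * (κ:ℂ)^3 * (h:ℂ)^3 + ((487013/1474560):ℂ) * Complex.I * (κ:ℂ)^3 * (h:ℂ)^3 + ((-16979/184320):ℂ) * (κ:ℂ)^4 * (h:ℂ)^4 + ((-2007/32768):ℂ) * Complex.I * (κ:ℂ)^4 * (h:ℂ)^4 + ((697/49152):ℂ) * (κ:ℂ)^5 * (h:ℂ)^5 + ((-11117/552960):ℂ) * Complex.I * (κ:ℂ)^5 * (h:ℂ)^5 + ((527633/103219200):ℂ) * (κ:ℂ)^6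 * (h:ℂ)^6 + ((1651/327680):ℂ) * Complex.I * (κ:ℂ)^6 * (h:ℂ)^6 + ((-113/196608):ℂ) * (κ:ℂ)^7 * (h:ℂ)^7 + ((108473/176947200):ℂ) * Complex.I * (κ:ℂ)^7 * (h:ℂ)^7 + ((-46747/309657600):ℂ) * (κ:ℂ)^8 * (h:ℂ)^8 + ((-1779/9175040):ℂ) * Complex.I * (κ:ℂ)^8 * (h:ℂ)^8 + ((89/8257536):ℂ) * (κ:ℂ)^9 * (h:ℂ)^9 + ((-45383/7431782400):ℂ) * Complex.I * (κ:ℂ)^9 * (h:ℂ)^9 + ((163/82575360):ℂ) * (κ:ℂ)^10 * (h:ℂ)^10 + ((37/11010048):ℂ) * Complex.I * (κ:ℂ)^10 * (h:ℂ)^10)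
noncomputable def Jg3dE1 (κ h : ℝ) : ℂ := ((-1:ℂ) * (h:ℂ) + ((105/512):ℂ) * (κ:ℂ) * (h:ℂ)^2 + ((-81797/122880):ℂ) * Complex.I * (κ:ℂ) * (h:ℂ)^2 + ((53011/184320):ℂ) * (κ:ℂ)^2 * (h:ℂ)^3 + ((419/4096):ℂ) * Complex.I * (κ:ℂ)^2 * (h:ℂ)^3 + ((-1841/32768):ℂ) * (κ:ℂ)^3 * (h:ℂ)^4 + ((18863/184320):ℂ) * Complex.I * (κ:ℂ)^3 * (h:ℂ)^4 + ((-101593/4423680):ℂ) * (κ:ℂ)^4 * (h:ℂ)^5 + ((-1523/98304):ℂ) * Complex.I * (κ:ℂ)^4 * (h:ℂ)^5 + ((1057/196608):ℂ) * (κ:ℂ)^5 * (h:ℂ)^6 + ((-60647/14745600):ℂ) * Complex.I * (κ:ℂ)^5 * (h:ℂ)^6 + ((3857/44236800):ℂ) * (κ:ℂ)^6 * (h:ℂ)^7 + ((583/983040):ℂ) * Complex.I * (κ:ℂ)^6 * (h:ℂ)^7 + ((-721/3932160):ℂ) * (κ:ℂ)^7 * (h:ℂ)^8 + ((-47/655360):ℂ)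 * Complex.I * (κ:ℂ)^7 * (h:ℂ)^8 + ((181/3932160):ℂ) * (κ:ℂ)^8 * (h:ℂ)^9 + ((17/1310720):ℂ) * Complex.I * (κ:ℂ)^8 * (h:ℂ)^9)
noncomputable def Jg3dE2 (κ h : ℝ) : ℂ := (((-1/30):ℂ) * Complex.I * (κ:ℂ) * (h:ℂ)^3 + ((3001/81920):ℂ) * (κ:ℂ)^2 * (h:ℂ)^4 + ((7/1024):ℂ) * Complex.I * (κ:ℂ)^2 * (h:ℂ)^4 + ((-1727/196608):ℂ) * (κ:ℂ)^3 * (h:ℂ)^5 + ((142351/8847360):ℂ) * Complex.I * (κ:ℂ)^3 * (h:ℂ)^5 + ((-719087/309657600):ℂ) * (κ:ℂ)^4 * (h:ℂ)^6 + ((-121/245760):ℂ) * Complex.I * (κ:ℂ)^4 * (h:ℂ)^6 + ((557/393216):ℂ) * (κ:ℂ)^5 * (h:ℂ)^7 + ((-41923/88473600):ℂ) * Complex.I * (κ:ℂ)^5 * (h:ℂ)^7 + ((-101069/309657600):ℂ) * (κ:ℂ)^6 * (h:ℂ)^8 + ((-991/6881280):ℂ) * Complex.I * (κ:ℂ)^6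 * (h:ℂ)^8 + ((-1089/18350080):ℂ) * (κ:ℂ)^7 * (h:ℂ)^9 + ((-134213/2477260800):ℂ) * Complex.I * (κ:ℂ)^7 * (h:ℂ)^9 + ((531/18350080):ℂ) * (κ:ℂ)^8 * (h:ℂ)^10 + ((19/1146880):ℂ) * Complex.I * (κ:ℂ)^8 * (h:ℂ)^10)
noncomputable def Jg3dE3 (κ h : ℝ) : ℂ := (((1/90):ℂ) * (κ:ℂ)^2 * (h:ℂ)^5 + ((-7/3072):ℂ) * (κ:ℂ)^3 * (h:ℂ)^6 + ((81797/11059200):ℂ) * Complex.I * (κ:ℂ)^3 * (h:ℂ)^6 + ((-22291/16588800):ℂ) * (κ:ℂ)^4 * (h:ℂ)^7 + ((-419/368640):ℂ) * Complex.I * (κ:ℂ)^4 * (h:ℂ)^7 + ((721/2949120):ℂ) * (κ:ℂ)^5 * (h:ℂ)^8 + ((47/491520):ℂ) * Complex.I * (κ:ℂ)^5 * (h:ℂ)^8 + ((-181/2949120):ℂ) * (κ:ℂ)^6 * (h:ℂ)^9 + ((-17/983040):ℂ) * Complex.I * (κ:ℂ)^6 * (h:ℂ)^9)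
noncomputable def Jg3dE4 (κ h : ℝ) : ℂ := (((1/60):ℂ) * (h:ℂ)^4 + ((-7/2048):ℂ) * (κ:ℂ) * (h:ℂ)^5 + ((18817/1474560):ℂ) * Complex.I * (κ:ℂ) * (h:ℂ)^5 + ((-552361/309657600):ℂ) * (κ:ℂ)^2 * (h:ℂ)^6 + ((-503/245760):ℂ) * Complex.I * (κ:ℂ)^2 * (h:ℂ)^6 + ((301/786432):ℂ) * (κ:ℂ)^3 * (h:ℂ)^7 + ((134509/176947200):ℂ) * Complex.I * (κ:ℂ)^3 * (h:ℂ)^7 + ((-1297829/3715891200):ℂ) * (κ:ℂ)^4 * (h:ℂ)^8 + ((-9173/41287680):ℂ) * Complex.I * (κ:ℂ)^4 * (h:ℂ)^8 + ((293/165150720):ℂ) * (κ:ℂ)^5 * (h:ℂ)^9 + ((-74993/2477260800):ℂ) * Complex.I * (κ:ℂ)^5 * (h:ℂ)^9 + ((449/33030144):ℂ) * (κ:ℂ)^6 * (h:ℂ)^10 + ((337/27525120):ℂ) * Complex.I * (κ:ℂ)^6 * (h:ℂ)^10)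
noncomputable def Jg3dE5 (κ h : ℝ) : ℂ := (((1/90):ℂ) * (h:ℂ)^5 + ((-7/3072):ℂ) * (κ:ℂ) * (h:ℂ)^6 + ((81797/11059200):ℂ) * Complex.I * (κ:ℂ) * (h:ℂ)^6 + ((-22291/16588800):ℂ) * (κ:ℂ)^2 * (h:ℂ)^7 + ((-419/368640):ℂ) * Complex.I * (κ:ℂ)^2 * (h:ℂ)^7 + ((721/2949120):ℂ) * (κ:ℂ)^3 * (h:ℂ)^8 + ((47/491520):ℂ) * Complex.I * (κ:ℂ)^3 * (h:ℂ)^8 + ((-181/2949120):ℂ) * (κ:ℂ)^4 * (h:ℂ)^9 + ((-17/983040):ℂ) * Complex.I * (κ:ℂ)^4 * (h:ℂ)^9)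
noncomputable def Jg3dE6 (κ h : ℝ) : ℂ := (((1/504):ℂ) * (h:ℂ)^6 + ((-5/12288):ℂ) * (κ:ℂ) * (h:ℂ)^7 + ((56671/44236800):ℂ) * Complex.I * (κ:ℂ) * (h:ℂ)^7 + ((-438521/1857945600):ℂ) * (κ:ℂ)^2 * (h:ℂ)^8 + ((-2011/10321920):ℂ) * Complex.I * (κ:ℂ)^2 * (h:ℂ)^8 + ((6827/165150720):ℂ) * (κ:ℂ)^3 * (h:ℂ)^9 + ((43447/7431782400):ℂ) * Complex.I * (κ:ℂ)^3 * (h:ℂ)^9 + ((-941/165150720):ℂ) * (κ:ℂ)^4 * (h:ℂ)^10 + ((11/9175040):ℂ) * Complex.I * (κ:ℂ)^4 * (h:ℂ)^10)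
noncomputable def Jg3d (κ : ℝ) : ℕ → ℝ → ℂ
  | 0, h => Jg3dE0 κ h
  | 1, h => Jg3dE1 κ h
  | 2, h => Jg3dE2 κ h
  | 3, h => Jg3dE3 κ h
  | 4, h => Jg3dE4 κ h
  | 5, h => Jg3dE5 κ h
  | 6, h => Jg3dE6 κ h
  | _, _ => 0

noncomputable def QqE0 (κ h : ℝ) : ℂ := (((19/327680):ℂ) * (κ:ℂ)^7 * (h:ℂ)^7 + ((-37003/137625600):ℂ) * Complex.I * (κ:ℂ)^7 * (h:ℂ)^7 + ((-253/1228800):ℂ) * (κ:ℂ)^8 * (h:ℂ)^8 + ((-3/131072):ℂ) * Complex.I * (κ:ℂ)^8 * (h:ℂ)^8 + ((23/2293760):ℂ) * (κ:ℂ)^9 * (h:ℂ)^9 + ((61/117964800):ℂ) * Complex.I * (κ:ℂ)^9 * (h:ℂ)^9 + ((4237/412876800):ℂ) * (κ:ℂ)^10 * (h:ℂ)^10 + ((53/9175040):ℂ) * Complex.I * (κ:ℂ)^10 * (h:ℂ)^10 + ((-3/9175040):ℂ) * (κ:ℂ)^11 * (h:ℂ)^11 + ((-389/165150720):ℂ)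 * Complex.I * (κ:ℂ)^11 * (h:ℂ)^11)
noncomputable def QqE1 (κ h : ℝ) : ℂ := (((-1537/1966080):ℂ) * (κ:ℂ)^5 * (h:ℂ)^7 + ((-140017/619315200):ℂ) * Complex.I * (κ:ℂ)^5 * (h:ℂ)^7 + ((23593/44236800):ℂ) * (κ:ℂ)^6 * (h:ℂ)^8 + ((47/40960):ℂ) * Complex.I * (κ:ℂ)^6 * (h:ℂ)^8 + ((9811/55050240):ℂ) * (κ:ℂ)^7 * (h:ℂ)^9 + ((44417/353894400):ℂ) * Complex.I * (κ:ℂ)^7 * (h:ℂ)^9 + ((-13331/275251200):ℂ) * (κ:ℂ)^8 * (h:ℂ)^10 + ((-2939/27525120):ℂ) * Complex.I * (κ:ℂ)^8 * (h:ℂ)^10 + ((-137/18350080):ℂ) * (κ:ℂ)^9 * (h:ℂ)^11 + ((439/27525120):ℂ) * Complex.I * (κ:ℂ)^9 * (h:ℂ)^11)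
noncomputable def QqE2 (κ h : ℝ) : ℂ := (((-2371/1966080):ℂ) * (κ:ℂ)^3 * (h:ℂ)^7 + ((1185839/619315200):ℂ) * Complex.I * (κ:ℂ)^3 * (h:ℂ)^7 + ((-1369/4423680):ℂ) * (κ:ℂ)^4 * (h:ℂ)^8 + ((313/491520):ℂ) * Complex.I * (κ:ℂ)^4 * (h:ℂ)^8 + ((63383/165150720):ℂ) * (κ:ℂ)^5 * (h:ℂ)^9 + ((-16817/212336640):ℂ) * Complex.I * (κ:ℂ)^5 * (h:ℂ)^9 + ((-6637/91750400):ℂ) * (κ:ℂ)^6 * (h:ℂ)^10 + ((-377/8257536):ℂ) * Complex.I * (κ:ℂ)^6 * (h:ℂ)^10 + ((-173/55050240):ℂ) * (κ:ℂ)^7 * (h:ℂ)^11 + ((5/8257536):ℂ) * Complex.I * (κ:ℂ)^7 * (h:ℂ)^11)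
noncomputable def QqE3 (κ h : ℝ) : ℂ := (((1/504):ℂ) * Complex.I * (κ:ℂ) * (h:ℂ)^7 + ((-60767/44236800):ℂ) * (κ:ℂ)^2 * (h:ℂ)^8 + ((-5/12288):ℂ) * Complex.I * (κ:ℂ)^2 * (h:ℂ)^8 + ((2207/10321920):ℂ) * (κ:ℂ)^3 * (h:ℂ)^9 + ((-641/2073600):ℂ) * Complex.I * (κ:ℂ)^3 * (h:ℂ)^9 + ((1669/137625600):ℂ) * (κ:ℂ)^4 * (h:ℂ)^10 + ((4943/82575360):ℂ) * Complex.I * (κ:ℂ)^4 * (h:ℂ)^10 + ((101/55050240):ℂ) * (κ:ℂ)^5 * (h:ℂ)^11 + ((-23/2293760):ℂ) * Complex.I * (κ:ℂ)^5 * (h:ℂ)^11)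
noncomputable def Qq (κ : ℝ) : ℕ → ℝ → ℂ
  | 0, h => QqE0 κ h
  | 1, h => QqE1 κ h
  | 2, h => QqE2 κ h
  | 3, h => QqE3 κ h
  | _, _ => 0


noncomputable def Qpoly0 (κ h : ℝ) : ℂ := (((19/327680):ℂ) * (κ:ℂ)^7 + ((-37003/137625600):ℂ) * Complex.I * (κ:ℂ)^7 + ((-253/1228800):ℂ) * (κ:ℂ)^8 * (h:ℂ) + ((-3/131072):ℂ) * Complex.I * (κ:ℂ)^8 * (h:ℂ) + ((23/2293760):ℂ) * (κ:ℂ)^9 * (h:ℂ)^2 + ((61/117964800):ℂ) * Complex.I * (κ:ℂ)^9 * (h:ℂ)^2 + ((4237/412876800):ℂ) * (κ:ℂ)^10 * (h:ℂ)^3 + ((53/9175040):ℂ) * Complex.I * (κ:ℂ)^10 * (h:ℂ)^3 + ((-3/9175040):ℂ) * (κ:ℂ)^11 * (h:ℂ)^4 + ((-389/165150720):ℂ) * Complex.I * (κ:ℂ)^11 * (h:ℂ)^4)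
lemma Qq_fact0 (κ h : ℝ) : QqE0 κ h = (h:ℂ)^7 * Qpoly0 κ h := by
  simp only [QqE0, Qpoly0]; ring

noncomputable def Qpoly1 (κ h : ℝ) : ℂ := (((-1537/1966080):ℂ) * (κ:ℂ)^5 + ((-140017/619315200):ℂ) * Complex.I * (κ:ℂ)^5 + ((23593/44236800):ℂ) * (κ:ℂ)^6 * (h:ℂ) + ((47/40960):ℂ) * Complex.I * (κ:ℂ)^6 * (h:ℂ) + ((9811/55050240):ℂ) * (κ:ℂ)^7 * (h:ℂ)^2 + ((44417/353894400):ℂ) * Complex.I * (κ:ℂ)^7 * (h:ℂ)^2 + ((-13331/275251200):ℂ) * (κ:ℂ)^8 * (h:ℂ)^3 + ((-2939/27525120):ℂ) * Complex.I * (κ:ℂ)^8 * (h:ℂ)^3 + ((-137/18350080):ℂ) * (κ:ℂ)^9 * (h:ℂ)^4 + ((439/27525120):ℂ) * Complex.I * (κ:ℂ)^9 * (h:ℂ)^4)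
lemma Qq_fact1 (κ h : ℝ) : QqE1 κ h = (h:ℂ)^7 * Qpoly1 κ h := by
  simp only [QqE1, Qpoly1]; ring

noncomputable def Qpoly2 (κ h : ℝ) : ℂ := (((-2371/1966080):ℂ) * (κ:ℂ)^3 + ((1185839/619315200):ℂ) * Complex.I * (κ:ℂ)^3 + ((-1369/4423680):ℂ) * (κ:ℂ)^4 * (h:ℂ) + ((313/491520):ℂ) * Complex.I * (κ:ℂ)^4 * (h:ℂ) + ((63383/165150720):ℂ) * (κ:ℂ)^5 * (h:ℂ)^2 + ((-16817/212336640):ℂ) * Complex.I * (κ:ℂ)^5 * (h:ℂ)^2 + ((-6637/91750400):ℂ) * (κ:ℂ)^6 * (h:ℂ)^3 + ((-377/8257536):ℂ) * Complex.I * (κ:ℂ)^6 * (h:ℂ)^3 + ((-173/55050240):ℂ) * (κ:ℂ)^7 * (h:ℂ)^4 + ((5/8257536):ℂ) * Complex.I * (κ:ℂ)^7 * (h:ℂ)^4)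
lemma Qq_fact2 (κ h : ℝ) : QqE2 κ h = (h:ℂ)^7 * Qpoly2 κ h := by
  simp only [QqE2, Qpoly2]; ring

noncomputable def Qpoly3 (κ h : ℝ) : ℂ := (((1/504):ℂ) * Complex.I * (κ:ℂ) + ((-60767/44236800):ℂ) * (κ:ℂ)^2 * (h:ℂ) + ((-5/12288):ℂ) * Complex.I * (κ:ℂ)^2 * (h:ℂ) + ((2207/10321920):ℂ) * (κ:ℂ)^3 * (h:ℂ)^2 + ((-641/2073600):ℂ) * Complex.I * (κ:ℂ)^3 * (h:ℂ)^2 + ((1669/137625600):ℂ) * (κ:ℂ)^4 * (h:ℂ)^3 + ((4943/82575360):ℂ) * Complex.I * (κ:ℂ)^4 * (h:ℂ)^3 + ((101/55050240):ℂ) * (κ:ℂ)^5 * (h:ℂ)^4 + ((-23/2293760):ℂ) * Complex.I * (κ:ℂ)^5 * (h:ℂ)^4)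
lemma Qq_fact3 (κ h : ℝ) : QqE3 κ h = (h:ℂ)^7 * Qpoly3 κ h := by
  simp only [QqE3, Qpoly3]; ring

noncomputable def px (v : ℝ × ℝ → ℂ) : ℝ × ℝ → ℂ := fun p => deriv (fun x => v (x, p.2)) p.1
noncomputable def py (v : ℝ × ℝ → ℂ) : ℝ × ℝ → ℂ := fun p => deriv (fun y => v (p.1, y)) p.2


lemma py_iter_slice (u : ℝ × ℝ → ℂ) (n : ℕ) (x : ℝ) :
    (fun y => py^[n] u (x, y)) = iteratedDeriv n (fun t => u (x, t)) := by
  induction n with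
  | zero => simp
  | succ n ih =>
    funext y
    rw [Function.iterate_succ_apply', iteratedDeriv_succ, ← ih]
    rfl

lemma px_iter_slice (w : ℝ × ℝ → ℂ) (m : ℕ) (y : ℝ) :
    (fun x => px^[m] w (x, y)) = iteratedDeriv m (fun s => w (s, y)) := by
  induction m with
  | zero => simp
  | succ m ih =>
    funext x
    rw [Function.iterate_succ_apply', iteratedDeriv_succ, ← ih]
    rfl

lemma pd_eq_iter (u : ℝ × ℝ → ℂ) (m n : ℕ) (x y : ℝ) :
    pd u m n x y = px^[m] (py^[n] u) (x, y) := by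
  unfold pd
  have h1 : (fun s => iteratedDeriv n (fun t => u (s, t)) y) = fun s => py^[n] u (s, y) := by
    funext s; rw [← py_iter_slice]
  rw [h1, ← px_iter_slice]

lemma hasDerivAt_slice_x {v : ℝ × ℝ → ℂ} {a b : ℝ} (hv : DifferentiableAt ℝ v (a, b)) :
    HasDerivAt (fun x => v (x, b)) (fderiv ℝ v (a, b) (1, 0)) a := by
  have h1 : HasDerivAt (fun x : ℝ => ((x, b) : ℝ × ℝ)) ((1 : ℝ), (0 : ℝ)) a :=
    (hasDerivAt_id a).prodMk (hasDerivAt_const a b)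
  exact hv.hasFDerivAt.comp_hasDerivAt a h1

lemma hasDerivAt_slice_y {v : ℝ × ℝ → ℂ} {a b : ℝ} (hv : DifferentiableAt ℝ v (a, b)) :
    HasDerivAt (fun y => v (a, y)) (fderiv ℝ v (a, b) (0, 1)) b := by
  have h1 : HasDerivAt (fun y : ℝ => ((a, y) : ℝ × ℝ)) ((0 : ℝ), (1 : ℝ)) b :=
    (hasDerivAt_const b a).prodMk (hasDerivAt_id b)
  exact hv.hasFDerivAt.comp_hasDerivAt b h1

lemma px_eq_fderiv {v : ℝ × ℝ → ℂ} {a b : ℝ} (hv : DifferentiableAt ℝ v (a, b)) :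
    px v (a, b) = fderiv ℝ v (a, b) (1, 0) := (hasDerivAt_slice_x hv).deriv

lemma py_eq_fderiv {v : ℝ × ℝ → ℂ} {a b : ℝ} (hv : DifferentiableAt ℝ v (a, b)) :
    py v (a, b) = fderiv ℝ v (a, b) (0, 1) := (hasDerivAt_slice_y hv).deriv

lemma diffat {U : Set (ℝ × ℝ)} {v : ℝ × ℝ → ℂ} (hU : IsOpen U) {N : ℕ} (hN : 1 ≤ N)
    (hv : ContDiffOn ℝ N v U) {p : ℝ × ℝ} (hp : p ∈ U) : DifferentiableAt ℝ v p :=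
  ((hv.differentiableOn (by exact_mod_cast (show N ≠ 0 by omega))).differentiableAt (hU.mem_nhds hp))

lemma contDiffOn_px {U : Set (ℝ × ℝ)} {v : ℝ × ℝ → ℂ} (hU : IsOpen U) {N : ℕ}
    (hv : ContDiffOn ℝ (N + 1) v U) : ContDiffOn ℝ N (px v) U := by
  have h1 : ContDiffOn ℝ N (fun p => fderiv ℝ v p (1, 0)) U :=
    (hv.fderiv_of_isOpen hU (by exact_mod_cast le_rfl)).clm_apply contDiffOn_const
  refine h1.congr fun p hp => ?_
  obtain ⟨a, b⟩ := p
  exact px_eq_fderiv (diffat hU (Nat.le_add_left 1 N) hv hp)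

lemma contDiffOn_py {U : Set (ℝ × ℝ)} {v : ℝ × ℝ → ℂ} (hU : IsOpen U) {N : ℕ}
    (hv : ContDiffOn ℝ (N + 1) v U) : ContDiffOn ℝ N (py v) U := by
  have h1 : ContDiffOn ℝ N (fun p => fderiv ℝ v p (0, 1)) U :=
    (hv.fderiv_of_isOpen hU (by exact_mod_cast le_rfl)).clm_apply contDiffOn_const
  refine h1.congr fun p hp => ?_
  obtain ⟨a, b⟩ := p
  exact py_eq_fderiv (diffat hU (Nat.le_add_left 1 N) hv hp)

lemma contDiffOn_py_iter {U : Set (ℝ × ℝ)} (hU : IsOpen U) (n : ℕ) :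
    ∀ {N : ℕ} {v : ℝ × ℝ → ℂ}, ContDiffOn ℝ (N + n) v U → ContDiffOn ℝ N (py^[n] v) U := by
  induction n with
  | zero => intro N v hv; simpa using hv
  | succ n ih =>
    intro N v hv
    rw [Function.iterate_succ_apply]
    have hv' : ContDiffOn ℝ ((N + n : ℕ) + 1) v U := by exact_mod_cast hv
    exact ih (contDiffOn_py hU hv')

lemma contDiffOn_px_iter {U : Set (ℝ × ℝ)} (hU : IsOpen U) (m : ℕ) :
    ∀ {N : ℕ} {v : ℝ × ℝ → ℂ}, ContDiffOn ℝ (N + m) v U → ContDiffOn ℝ N (px^[m] v) U := by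
  induction m with
  | zero => intro N v hv; simpa using hv
  | succ m ih =>
    intro N v hv
    rw [Function.iterate_succ_apply]
    have hv' : ContDiffOn ℝ ((N + m : ℕ) + 1) v U := by exact_mod_cast hv
    exact ih (contDiffOn_px hU hv')

lemma contDiffOn_pxy {U : Set (ℝ × ℝ)} (hU : IsOpen U) (m n : ℕ) {N : ℕ} {v : ℝ × ℝ → ℂ}
    (hv : ContDiffOn ℝ (N + m + n) v U) : ContDiffOn ℝ N (px^[m] (py^[n] v)) U := by
  have hv' : ContDiffOn ℝ ((N + m : ℕ) + n) v U := by exact_mod_cast hv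
  exact contDiffOn_px_iter hU m (contDiffOn_py_iter hU n hv')

lemma px_congr_on {U : Set (ℝ × ℝ)} (hU : IsOpen U) {w w' : ℝ × ℝ → ℂ}
    (hw : Set.EqOn w w' U) : Set.EqOn (px w) (px w') U := by
  rintro ⟨a, b⟩ hp
  have hopen : IsOpen {x : ℝ | (x, b) ∈ U} := hU.preimage (by fun_prop)
  have hev : (fun x => w (x, b)) =ᶠ[nhds a] fun x => w' (x, b) := by
    filter_upwards [hopen.mem_nhds hp] with x hx using hw hx
  exact hev.deriv_eq

lemma py_congr_on {U : Set (ℝ × ℝ)} (hU : IsOpen U) {w w' : ℝ × ℝ → ℂ}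
    (hw : Set.EqOn w w' U) : Set.EqOn (py w) (py w') U := by
  rintro ⟨a, b⟩ hp
  have hopen : IsOpen {y : ℝ | (a, y) ∈ U} := hU.preimage (by fun_prop)
  have hev : (fun y => w (a, y)) =ᶠ[nhds b] fun y => w' (a, y) := by
    filter_upwards [hopen.mem_nhds hp] with y hy using hw hy
  exact hev.deriv_eq

lemma px_iter_congr_on {U : Set (ℝ × ℝ)} (hU : IsOpen U) (m : ℕ) {w w' : ℝ × ℝ → ℂ}
    (hw : Set.EqOn w w' U) : Set.EqOn (px^[m] w) (px^[m] w') U := by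
  induction m generalizing w w' with
  | zero => simpa using hw
  | succ m ih =>
    rw [Function.iterate_succ_apply, Function.iterate_succ_apply]
    exact ih (px_congr_on hU hw)

lemma py_iter_congr_on {U : Set (ℝ × ℝ)} (hU : IsOpen U) (n : ℕ) {w w' : ℝ × ℝ → ℂ}
    (hw : Set.EqOn w w' U) : Set.EqOn (py^[n] w) (py^[n] w') U := by
  induction n generalizing w w' with
  | zero => simpa using hw
  | succ n ih =>
    rw [Function.iterate_succ_apply, Function.iterate_succ_apply]
    exact ih (py_congr_on hU hw)

lemma diffat_slice_y {v : ℝ × ℝ → ℂ} {a b : ℝ} (hv : DifferentiableAt ℝ v (a, b)) :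
    DifferentiableAt ℝ (fun t => v (a, t)) b := (hasDerivAt_slice_y hv).differentiableAt

lemma diffat_slice_x {v : ℝ × ℝ → ℂ} {a b : ℝ} (hv : DifferentiableAt ℝ v (a, b)) :
    DifferentiableAt ℝ (fun s => v (s, b)) a := (hasDerivAt_slice_x hv).differentiableAt

lemma py_add_smul {w₁ w₂ : ℝ × ℝ → ℂ} (c₁ c₂ : ℂ) {a b : ℝ}
    (h1 : DifferentiableAt ℝ w₁ (a, b)) (h2 : DifferentiableAt ℝ w₂ (a, b)) :
    py (fun q => c₁ * w₁ q + c₂ * w₂ q) (a, b) = c₁ * py w₁ (a, b) + c₂ * py w₂ (a, b) := by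
  have hs1 := (diffat_slice_y h1).hasDerivAt
  have hs2 := (diffat_slice_y h2).hasDerivAt
  exact ((hs1.const_mul c₁).add (hs2.const_mul c₂)).deriv

lemma px_add_smul {w₁ w₂ : ℝ × ℝ → ℂ} (c₁ c₂ : ℂ) {a b : ℝ}
    (h1 : DifferentiableAt ℝ w₁ (a, b)) (h2 : DifferentiableAt ℝ w₂ (a, b)) :
    px (fun q => c₁ * w₁ q + c₂ * w₂ q) (a, b) = c₁ * px w₁ (a, b) + c₂ * px w₂ (a, b) := by
  have hs1 := (diffat_slice_x h1).hasDerivAt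
  have hs2 := (diffat_slice_x h2).hasDerivAt
  exact ((hs1.const_mul c₁).add (hs2.const_mul c₂)).deriv

lemma py_iter_add_smul {U : Set (ℝ × ℝ)} (hU : IsOpen U) (n : ℕ) :
    ∀ {w₁ w₂ : ℝ × ℝ → ℂ} (c₁ c₂ : ℂ), ContDiffOn ℝ n w₁ U → ContDiffOn ℝ n w₂ U →
      Set.EqOn (py^[n] (fun q => c₁ * w₁ q + c₂ * w₂ q))
        (fun q => c₁ * py^[n] w₁ q + c₂ * py^[n] w₂ q) U := by
  induction n with
  | zero => intro w₁ w₂ c₁ c₂ _ _ p hp; simp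
  | succ n ih =>
    intro w₁ w₂ c₁ c₂ hw₁ hw₂ p hp
    rw [Function.iterate_succ_apply, Function.iterate_succ_apply, Function.iterate_succ_apply]
    have hstep : Set.EqOn (py (fun q => c₁ * w₁ q + c₂ * w₂ q))
        (fun q => c₁ * py w₁ q + c₂ * py w₂ q) U := by
      rintro ⟨x, y⟩ hq
      exact py_add_smul c₁ c₂ (diffat hU (Nat.le_add_left 1 n) hw₁ hq)
        (diffat hU (Nat.le_add_left 1 n) hw₂ hq)
    have hw₁' : ContDiffOn ℝ n (py w₁) U := contDiffOn_py hU hw₁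
    have hw₂' : ContDiffOn ℝ n (py w₂) U := contDiffOn_py hU hw₂
    calc py^[n] (py (fun q => c₁ * w₁ q + c₂ * w₂ q)) p
        = py^[n] (fun q => c₁ * py w₁ q + c₂ * py w₂ q) p :=
          py_iter_congr_on hU n hstep hp
      _ = c₁ * py^[n] (py w₁) p + c₂ * py^[n] (py w₂) p := ih c₁ c₂ hw₁' hw₂' hp

lemma px_iter_add_smul {U : Set (ℝ × ℝ)} (hU : IsOpen U) (m : ℕ) :
    ∀ {w₁ w₂ : ℝ × ℝ → ℂ} (c₁ c₂ : ℂ), ContDiffOn ℝ m w₁ U → ContDiffOn ℝ m w₂ U →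
      Set.EqOn (px^[m] (fun q => c₁ * w₁ q + c₂ * w₂ q))
        (fun q => c₁ * px^[m] w₁ q + c₂ * px^[m] w₂ q) U := by
  induction m with
  | zero => intro w₁ w₂ c₁ c₂ _ _ p hp; simp
  | succ m ih =>
    intro w₁ w₂ c₁ c₂ hw₁ hw₂ p hp
    rw [Function.iterate_succ_apply, Function.iterate_succ_apply, Function.iterate_succ_apply]
    have hstep : Set.EqOn (px (fun q => c₁ * w₁ q + c₂ * w₂ q))
        (fun q => c₁ * px w₁ q + c₂ * px w₂ q) U := by
      rintro ⟨x, y⟩ hq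
      exact px_add_smul c₁ c₂ (diffat hU (Nat.le_add_left 1 m) hw₁ hq)
        (diffat hU (Nat.le_add_left 1 m) hw₂ hq)
    have hw₁' : ContDiffOn ℝ m (px w₁) U := contDiffOn_px hU hw₁
    have hw₂' : ContDiffOn ℝ m (px w₂) U := contDiffOn_px hU hw₂
    calc px^[m] (px (fun q => c₁ * w₁ q + c₂ * w₂ q)) p
        = px^[m] (fun q => c₁ * px w₁ q + c₂ * px w₂ q) p :=
          px_iter_congr_on hU m hstep hp
      _ = c₁ * px^[m] (px w₁) p + c₂ * px^[m] (px w₂) p := ih c₁ c₂ hw₁' hw₂' hp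

lemma schwarz {U : Set (ℝ × ℝ)} (hU : IsOpen U) {v : ℝ × ℝ → ℂ} {N : ℕ} (hN : 2 ≤ N)
    (hv : ContDiffOn ℝ N v U) {a b : ℝ} (hp : (a, b) ∈ U) :
    px (py v) (a, b) = py (px v) (a, b) := by
  have hN' : ContDiffOn ℝ 2 v U := hv.of_le (by exact_mod_cast hN)
  have hd2 : ContDiffOn ℝ 1 (fderiv ℝ v) U := hN'.fderiv_of_isOpen hU (by norm_num)
  have hdd : DifferentiableAt ℝ (fderiv ℝ v) (a, b) :=
    (hd2.differentiableOn (by norm_num)).differentiableAt (hU.mem_nhds hp)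
  have hsymm := (hN'.contDiffAt (hU.mem_nhds hp)).isSymmSndFDerivAt (by norm_num)
  have hpyv : DifferentiableAt ℝ (py v) (a, b) :=
    diffat hU le_rfl (contDiffOn_py hU hN') hp
  have hpxv : DifferentiableAt ℝ (px v) (a, b) :=
    diffat hU le_rfl (contDiffOn_px hU hN') hp
  have hey : py v =ᶠ[nhds (a, b)] fun q => fderiv ℝ v q (0, 1) := by
    filter_upwards [hU.mem_nhds hp] with q hq
    obtain ⟨x, y⟩ := q
    exact py_eq_fderiv (diffat hU (by norm_num) hN' hq)
  have hex : px v =ᶠ[nhds (a, b)] fun q => fderiv ℝ v q (1, 0) := by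
    filter_upwards [hU.mem_nhds hp] with q hq
    obtain ⟨x, y⟩ := q
    exact px_eq_fderiv (diffat hU (by norm_num) hN' hq)
  have hIy : fderiv ℝ (fun q => fderiv ℝ v q (0, 1)) (a, b) =
      (ContinuousLinearMap.apply ℝ ℂ ((0 : ℝ), (1 : ℝ))).comp (fderiv ℝ (fderiv ℝ v) (a, b)) :=
    ((ContinuousLinearMap.apply ℝ ℂ ((0 : ℝ), (1 : ℝ))).hasFDerivAt.comp (a, b)
      hdd.hasFDerivAt).fderiv
  have hIx : fderiv ℝ (fun q => fderiv ℝ v q (1, 0)) (a, b) =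
      (ContinuousLinearMap.apply ℝ ℂ ((1 : ℝ), (0 : ℝ))).comp (fderiv ℝ (fderiv ℝ v) (a, b)) :=
    ((ContinuousLinearMap.apply ℝ ℂ ((1 : ℝ), (0 : ℝ))).hasFDerivAt.comp (a, b)
      hdd.hasFDerivAt).fderiv
  calc px (py v) (a, b) = fderiv ℝ (py v) (a, b) (1, 0) := px_eq_fderiv hpyv
    _ = fderiv ℝ (fun q => fderiv ℝ v q (0, 1)) (a, b) (1, 0) := by rw [hey.fderiv_eq]
    _ = fderiv ℝ (fderiv ℝ v) (a, b) (1, 0) (0, 1) := by rw [hIy]; rfl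
    _ = fderiv ℝ (fderiv ℝ v) (a, b) (0, 1) (1, 0) := hsymm.eq _ _
    _ = fderiv ℝ (fun q => fderiv ℝ v q (1, 0)) (a, b) (0, 1) := by rw [hIx]; rfl
    _ = fderiv ℝ (px v) (a, b) (0, 1) := by rw [hex.fderiv_eq]
    _ = py (px v) (a, b) := (py_eq_fderiv hpxv).symm

lemma comm_px_py_iter {U : Set (ℝ × ℝ)} (hU : IsOpen U) (n : ℕ) :
    ∀ {N : ℕ} {v : ℝ × ℝ → ℂ}, n + 2 ≤ N → ContDiffOn ℝ N v U →
      Set.EqOn (px (py^[n] v)) (py^[n] (px v)) U := by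
  induction n with
  | zero => intro N v _ _; simp [Set.EqOn]
  | succ n ih =>
    intro N v hn hv p hp
    rw [Function.iterate_succ_apply, Function.iterate_succ_apply]
    have h1 : ContDiffOn ℝ (N - 1 : ℕ) (py v) U := by
      apply contDiffOn_py hU
      exact hv.of_le (by exact_mod_cast Nat.succ_le_of_lt (by omega))
    calc px (py^[n] (py v)) p = py^[n] (px (py v)) p := ih (by omega) h1 hp
      _ = py^[n] (py (px v)) p := by
          refine py_iter_congr_on hU n ?_ hp
          rintro ⟨x, y⟩ hq
          exact schwarz hU (by omega) hv hq
      _ = py^[n+1] (px v) p := by rw [Function.iterate_succ_apply]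

lemma comm_pxm_pyn {U : Set (ℝ × ℝ)} (hU : IsOpen U) (m : ℕ) :
    ∀ {n N : ℕ} {v : ℝ × ℝ → ℂ}, m + n + 1 ≤ N → ContDiffOn ℝ N v U →
      Set.EqOn (px^[m] (py^[n] v)) (py^[n] (px^[m] v)) U := by
  induction m with
  | zero => intro n N v _ _; simp [Set.EqOn]
  | succ m ih =>
    intro n N v hmn hv p hp
    rw [Function.iterate_succ_apply' (f := px) (n := m)]
    calc px (px^[m] (py^[n] v)) p
        = px (py^[n] (px^[m] v)) p := by
          refine px_congr_on hU ?_ hp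
          exact ih (by omega) hv
      _ = py^[n] (px (px^[m] v)) p := by
          refine comm_px_py_iter hU n (N := N - m) (by omega) ?_ hp
          apply contDiffOn_px_iter hU m
          exact hv.of_le (by exact_mod_cast (by omega : (N - m) + m ≤ N))
      _ = py^[n] (px^[m+1] v) p := by
          refine py_iter_congr_on hU n ?_ hp
          intro q hq
          rw [Function.iterate_succ_apply' (f := px)]

lemma itd_open_eq {O : Set ℝ} (hO : IsOpen O) (f : ℝ → ℂ) (n : ℕ) {x : ℝ} (hx : x ∈ O) :
    iteratedDerivWithin n f O x = iteratedDeriv n f x := by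
  rw [iteratedDerivWithin_eq_iteratedFDerivWithin, iteratedDeriv_eq_iteratedFDeriv,
    iteratedFDerivWithin_of_isOpen n hO hx]

lemma diffat_itd {O : Set ℝ} (hO : IsOpen O) {f : ℝ → ℂ} {N n : ℕ}
    (hf : ContDiffOn ℝ N f O) (hn : n < N) {x : ℝ} (hx : x ∈ O) :
    DifferentiableAt ℝ (iteratedDeriv n f) x := by
  have h1 : DifferentiableOn ℝ (iteratedDerivWithin n f O) O :=
    hf.differentiableOn_iteratedDerivWithin (by exact_mod_cast hn) hO.uniqueDiffOn
  have h2 : DifferentiableOn ℝ (iteratedDeriv n f) O :=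
    h1.congr fun y hy => (itd_open_eq hO f n hy).symm
  exact h2.differentiableAt (hO.mem_nhds hx)

lemma itdW_eq {O s : Set ℝ} (hO : IsOpen O) (hs : UniqueDiffOn ℝ s) (hsub : s ⊆ O)
    {f : ℝ → ℂ} {N : ℕ} (hf : ContDiffOn ℝ N f O) :
    ∀ n, n ≤ N → ∀ x ∈ s, iteratedDerivWithin n f s x = iteratedDeriv n f x := by
  intro n
  induction n with
  | zero => intro _ x _; simp
  | succ n ih =>
    intro hn x hx
    rw [iteratedDerivWithin_succ]
    rw [derivWithin_congr (fun y hy => ih (by omega) y hy) (ih (by omega) x hx)]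
    rw [(diffat_itd hO hf (by omega) (hsub hx)).derivWithin (hs x hx)]
    rw [iteratedDeriv_succ]

lemma taylor_bound {O : Set ℝ} (hO : IsOpen O) {f : ℝ → ℂ} {n : ℕ} {x₀ r C : ℝ}
    (hr : 0 < r) (hsub : Set.Icc x₀ (x₀ + r) ⊆ O) (hf : ContDiffOn ℝ (n + 1) f O)
    (hC : ∀ y ∈ Set.Icc x₀ (x₀ + r), ‖iteratedDeriv (n + 1) f y‖ ≤ C)
    {x : ℝ} (hx : x ∈ Set.Icc x₀ (x₀ + r)) :
    ‖f x - ∑ k ∈ Finset.range (n + 1),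
        ((x - x₀) ^ k / (k.factorial : ℝ)) • iteratedDeriv k f x₀‖
      ≤ C * (x - x₀) ^ (n + 1) / (n.factorial : ℝ) := by
  have hab : x₀ ≤ x₀ + r := by linarith
  have hlt : x₀ < x₀ + r := by linarith
  have hs := uniqueDiffOn_Icc hlt
  have hfI : ContDiffOn ℝ (n + 1) f (Set.Icc x₀ (x₀ + r)) := hf.mono hsub
  have hC' : ∀ y ∈ Set.Icc x₀ (x₀ + r),
      ‖iteratedDerivWithin (n + 1) f (Set.Icc x₀ (x₀ + r)) y‖ ≤ C := by
    intro y hy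
    rw [itdW_eq hO hs hsub hf (n + 1) le_rfl y hy]
    exact hC y hy
  have hT := taylor_mean_remainder_bound hab hfI hx hC'
  have hTm : taylorWithinEval f n (Set.Icc x₀ (x₀ + r)) x₀ x
      = ∑ k ∈ Finset.range (n + 1),
          ((x - x₀) ^ k / (k.factorial : ℝ)) • iteratedDeriv k f x₀ := by
    rw [taylor_within_apply]
    refine Finset.sum_congr rfl fun k hk => ?_
    rw [itdW_eq (N := n + 1) hO hs hsub hf k
      (le_of_lt (Finset.mem_range.1 hk)) x₀ (Set.left_mem_Icc.2 hab), div_eq_inv_mul]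
  rw [hTm] at hT
  exact hT

lemma contDiffOn_slice_y {U : Set (ℝ × ℝ)} {u : ℝ × ℝ → ℂ} {N : ℕ∞}
    (hu : ContDiffOn ℝ N u U) (a : ℝ) :
    ContDiffOn ℝ N (fun t => u (a, t)) {t : ℝ | (a, t) ∈ U} := by
  have hline : ContDiff ℝ N (fun t : ℝ => ((a, t) : ℝ × ℝ)) := contDiff_const.prodMk contDiff_id
  exact hu.comp hline.contDiffOn fun t ht => ht

lemma contDiffOn_slice_x {U : Set (ℝ × ℝ)} {u : ℝ × ℝ → ℂ} {N : ℕ∞}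
    (hu : ContDiffOn ℝ N u U) (b : ℝ) :
    ContDiffOn ℝ N (fun s => u (s, b)) {s : ℝ | (s, b) ∈ U} := by
  have hline : ContDiff ℝ N (fun s : ℝ => ((s, b) : ℝ × ℝ)) := contDiff_id.prodMk contDiff_const
  exact hu.comp hline.contDiffOn fun s hs => hs


lemma rel_G3 {U : Set (ℝ × ℝ)} (hU : IsOpen U) {u : ℝ × ℝ → ℂ}
    (hu : ContDiffOn ℝ 8 u U) {W : Set ℝ} (hW : IsOpen W) {l₁ l₃ : ℝ}
    (hmem : (l₁, l₃) ∈ U) (hl₁ : l₁ ∈ W) {g₃ : ℝ → ℂ}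
    (hbc : ∀ x ∈ W, -(pd u 0 1 x l₃) = g₃ x) (n : ℕ) (hn : n ≤ 6) :
    iteratedDeriv n g₃ l₁ = -pd u n 1 l₁ l₃ := by
  set w : ℝ × ℝ → ℂ := fun q => (-1 : ℂ) * py u q + (0 : ℂ) * py u q with hw
  have hO : IsOpen (W ∩ {x : ℝ | (x, l₃) ∈ U}) :=
    hW.inter (hU.preimage (by fun_prop))
  have hlO : l₁ ∈ W ∩ {x : ℝ | (x, l₃) ∈ U} := ⟨hl₁, hmem⟩
  have hev : g₃ =ᶠ[nhds l₁] fun x => w (x, l₃) := by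
    filter_upwards [hO.mem_nhds hlO] with x hx
    rw [← hbc x hx.1, hw]
    have : pd u 0 1 x l₃ = py u (x, l₃) := by
      rw [pd_eq_iter]; simp
    rw [this]; ring
  rw [hev.iteratedDeriv_eq]
  have hslice := congrFun (px_iter_slice w n l₃) l₁
  rw [← hslice]
  have hpyu : ContDiffOn ℝ (n : ℕ) (py u) U := by
    apply contDiffOn_py hU
    exact hu.of_le (by exact_mod_cast (by omega : n + 1 ≤ 8))
  have := px_iter_add_smul hU n (-1 : ℂ) (0 : ℂ) hpyu hpyu hmem
  rw [hw]
  rw [this]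
  have : pd u n 1 l₁ l₃ = px^[n] (py u) (l₁, l₃) := by
    rw [pd_eq_iter]; simp
  rw [this]; ring

lemma rel_G1 {U : Set (ℝ × ℝ)} (hU : IsOpen U) {u : ℝ × ℝ → ℂ} (κ : ℝ)
    (hu : ContDiffOn ℝ 8 u U) {V : Set ℝ} (hV : IsOpen V) {l₁ l₃ : ℝ}
    (hmem : (l₁, l₃) ∈ U) (hl₃ : l₃ ∈ V) {g₁ : ℝ → ℂ}
    (hbc : ∀ y ∈ V, -(pd u 1 0 l₁ y) - Complex.I * (κ : ℂ) * u (l₁, y) = g₁ y)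
    (n : ℕ) (hn : n ≤ 6) :
    iteratedDeriv n g₁ l₃ = -pd u 1 n l₁ l₃ - Complex.I * (κ : ℂ) * pd u 0 n l₁ l₃ := by
  set w : ℝ × ℝ → ℂ := fun q => (-1 : ℂ) * px u q + (-(Complex.I * (κ : ℂ))) * u q with hw
  have hO : IsOpen (V ∩ {y : ℝ | (l₁, y) ∈ U}) :=
    hV.inter (hU.preimage (by fun_prop))
  have hlO : l₃ ∈ V ∩ {y : ℝ | (l₁, y) ∈ U} := ⟨hl₃, hmem⟩
  have hev : g₁ =ᶠ[nhds l₃] fun y => w (l₁, y) := by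
    filter_upwards [hO.mem_nhds hlO] with y hy
    rw [← hbc y hy.1, hw]
    have : pd u 1 0 l₁ y = px u (l₁, y) := by
      rw [pd_eq_iter]; simp
    rw [this]; ring
  rw [hev.iteratedDeriv_eq]
  have hslice := congrFun (py_iter_slice w n l₁) l₃
  rw [← hslice]
  have hpxu : ContDiffOn ℝ (n : ℕ) (px u) U := by
    apply contDiffOn_px hU
    exact hu.of_le (by exact_mod_cast (by omega : n + 1 ≤ 8))
  have hun : ContDiffOn ℝ (n : ℕ) u U := hu.of_le (by exact_mod_cast (by omega : n ≤ 8))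
  have hlin := py_iter_add_smul hU n (-1 : ℂ) (-(Complex.I * (κ : ℂ))) hpxu hun hmem
  rw [hw]
  rw [hlin]
  have hcomm := comm_px_py_iter hU n (N := 8) (by omega) hu hmem
  have h1 : pd u 1 n l₁ l₃ = px (py^[n] u) (l₁, l₃) := by
    rw [pd_eq_iter]; simp
  have h0 : pd u 0 n l₁ l₃ = py^[n] u (l₁, l₃) := by
    rw [pd_eq_iter]; simp
  rw [h1, h0, hcomm]
  ring

lemma rel_F {U : Set (ℝ × ℝ)} (hU : IsOpen U) {u : ℝ × ℝ → ℂ} (κ : ℝ)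
    (hu : ContDiffOn ℝ 8 u U) {l₁ l₃ : ℝ} (hmem : (l₁, l₃) ∈ U)
    (m n : ℕ) (hmn : m + n ≤ 5) :
    pd (helm κ u) m n l₁ l₃
      = pd u (m + 2) n l₁ l₃ + pd u m (n + 2) l₁ l₃ + (κ : ℂ) ^ 2 * pd u m n l₁ l₃ := by
  set w₂ : ℝ × ℝ → ℂ := fun q => (1 : ℂ) * py^[2] u q + ((κ : ℂ) ^ 2) * u q with hw₂
  set wtot : ℝ × ℝ → ℂ := fun q => (1 : ℂ) * px^[2] u q + (1 : ℂ) * w₂ q with hwtot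
  have hu6 : ContDiffOn ℝ 6 (px^[2] u) U := by
    apply contDiffOn_px_iter hU 2
    exact hu.of_le (by norm_num)
  have hu6' : ContDiffOn ℝ 6 (py^[2] u) U := by
    apply contDiffOn_py_iter hU 2
    exact hu.of_le (by norm_num)
  have hw₂6 : ContDiffOn ℝ 6 w₂ U := by
    rw [hw₂]
    exact (contDiffOn_const.mul hu6').add (contDiffOn_const.mul (hu.of_le (by norm_num)))
  have hhelm : helm κ u = wtot := by
    funext p
    simp only [helm, hwtot, hw₂]
    have h20 : pd u 2 0 p.1 p.2 = px^[2] u p := by rw [pd_eq_iter]; simp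
    have h02 : pd u 0 2 p.1 p.2 = py^[2] u p := by rw [pd_eq_iter]; simp
    rw [h20, h02]; push_cast; ring
  rw [hhelm, pd_eq_iter]
  -- expand py^[n] wtot on U
  have hl1 : Set.EqOn (py^[n] wtot)
      (fun q => (1 : ℂ) * py^[n] (px^[2] u) q + (1 : ℂ) * py^[n] w₂ q) U := by
    rw [hwtot]
    exact py_iter_add_smul hU n 1 1 (hu6.of_le (by exact_mod_cast (by omega : n ≤ 6)))
      (hw₂6.of_le (by exact_mod_cast (by omega : n ≤ 6)))
  have hl2 : Set.EqOn (py^[n] w₂)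
      (fun q => (1 : ℂ) * py^[n] (py^[2] u) q + ((κ : ℂ) ^ 2) * py^[n] u q) U := by
    rw [hw₂]
    exact py_iter_add_smul hU n 1 ((κ : ℂ) ^ 2) (hu6'.of_le (by exact_mod_cast (by omega : n ≤ 6)))
      (hu.of_le (by exact_mod_cast (by omega : (n : ℕ) ≤ 8)))
  have hcomb : Set.EqOn (py^[n] wtot)
      (fun q => (1 : ℂ) * py^[n] (px^[2] u) q
        + (1 : ℂ) * ((1 : ℂ) * py^[n] (py^[2] u) q + ((κ : ℂ) ^ 2) * py^[n] u q)) U := by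
    intro q hq
    rw [hl1 hq]
    simp only []
    rw [hl2 hq]
  -- smoothness of the pieces at level m
  have hA : ContDiffOn ℝ (m : ℕ) (py^[n] (px^[2] u)) U :=
    contDiffOn_py_iter hU n (hu6.of_le (by exact_mod_cast (by omega : m + n ≤ 6)))
  have hB : ContDiffOn ℝ (m : ℕ) (py^[n] (py^[2] u)) U :=
    contDiffOn_py_iter hU n (hu6'.of_le (by exact_mod_cast (by omega : m + n ≤ 6)))
  have hC : ContDiffOn ℝ (m : ℕ) (py^[n] u) U :=
    contDiffOn_py_iter hU n (hu.of_le (by exact_mod_cast (by omega : m + n ≤ 8)))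
  have hBC : ContDiffOn ℝ (m : ℕ)
      (fun q => (1 : ℂ) * py^[n] (py^[2] u) q + ((κ : ℂ) ^ 2) * py^[n] u q) U :=
    (contDiffOn_const.mul hB).add (contDiffOn_const.mul hC)
  calc px^[m] (py^[n] wtot) (l₁, l₃)
      = px^[m] (fun q => (1 : ℂ) * py^[n] (px^[2] u) q
          + (1 : ℂ) * ((1 : ℂ) * py^[n] (py^[2] u) q + ((κ : ℂ) ^ 2) * py^[n] u q)) (l₁, l₃) :=
        px_iter_congr_on hU m hcomb hmem
    _ = (1 : ℂ) * px^[m] (py^[n] (px^[2] u)) (l₁, l₃)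
        + (1 : ℂ) * px^[m] (fun q => (1 : ℂ) * py^[n] (py^[2] u) q
            + ((κ : ℂ) ^ 2) * py^[n] u q) (l₁, l₃) :=
        px_iter_add_smul hU m 1 1 hA hBC hmem
    _ = (1 : ℂ) * px^[m] (py^[n] (px^[2] u)) (l₁, l₃)
        + (1 : ℂ) * ((1 : ℂ) * px^[m] (py^[n] (py^[2] u)) (l₁, l₃)
            + ((κ : ℂ) ^ 2) * px^[m] (py^[n] u) (l₁, l₃)) := by
        rw [px_iter_add_smul hU m 1 ((κ : ℂ) ^ 2) hB hC hmem]
    _ = pd u (m + 2) n l₁ l₃ + pd u m (n + 2) l₁ l₃ + (κ : ℂ) ^ 2 * pd u m n l₁ l₃ := by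
        have e1 : px^[m] (py^[n] (px^[2] u)) (l₁, l₃) = pd u (m + 2) n l₁ l₃ := by
          have hsw : Set.EqOn (py^[n] (px^[2] u)) (px^[2] (py^[n] u)) U :=
            fun q hq => (comm_pxm_pyn hU 2 (n := n) (N := 8) (by omega) hu hq).symm
          rw [px_iter_congr_on hU m hsw hmem]
          rw [pd_eq_iter]
          rw [← Function.iterate_add_apply px m 2 (py^[n] u)]
        have e2 : px^[m] (py^[n] (py^[2] u)) (l₁, l₃) = pd u m (n + 2) l₁ l₃ := by
          rw [pd_eq_iter]
          rw [← Function.iterate_add_apply py n 2 u]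
        have e3 : px^[m] (py^[n] u) (l₁, l₃) = pd u m n l₁ l₃ := (pd_eq_iter u m n l₁ l₃).symm
        rw [e1, e2, e3]; ring

noncomputable def TPoly (D : ℕ → ℕ → ℂ) (a b : ℝ) : ℂ :=
  ∑ n ∈ Finset.range 8, ∑ m ∈ Finset.range (8 - n),
    (((Nat.factorial m * Nat.factorial n : ℕ) : ℂ))⁻¹ * (a:ℂ)^m * (b:ℂ)^n * D m n

lemma taylor2D {U : Set (ℝ × ℝ)} (hU : IsOpen U) {u : ℝ × ℝ → ℂ}
    (hu : ContDiffOn ℝ 8 u U) {l₁ l₃ ρ : ℝ} (hρ : 0 < ρ)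
    (hK : ∀ x y : ℝ, x ∈ Set.Icc l₁ (l₁ + ρ) → y ∈ Set.Icc l₃ (l₃ + ρ) → (x, y) ∈ U) :
    ∃ C : ℝ, 0 ≤ C ∧ ∀ a b : ℝ, a ∈ Set.Icc 0 ρ → b ∈ Set.Icc 0 ρ →
      ‖u (l₁ + a, l₃ + b) - TPoly (fun m n => pd u m n l₁ l₃) a b‖ ≤ C * (max a b) ^ 8 := by
  have hKc : IsCompact (Set.Icc l₁ (l₁ + ρ) ×ˢ Set.Icc l₃ (l₃ + ρ)) :=
    isCompact_Icc.prod isCompact_Icc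
  have hKU : (Set.Icc l₁ (l₁ + ρ) ×ˢ Set.Icc l₃ (l₃ + ρ)) ⊆ U := by
    rintro ⟨x, y⟩ ⟨hx, hy⟩; exact hK x y hx hy
  have hMall : ∀ n : ℕ, n ≤ 8 → ∃ M : ℝ, ∀ p ∈ Set.Icc l₁ (l₁ + ρ) ×ˢ Set.Icc l₃ (l₃ + ρ),
      ‖px^[8 - n] (py^[n] u) p‖ ≤ M := by
    intro n hn
    have hcd : ContDiffOn ℝ (0 : ℕ) (px^[8 - n] (py^[n] u)) U :=
      contDiffOn_pxy hU (8 - n) n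
        (hu.of_le (by exact_mod_cast (by omega : 0 + (8 - n) + n ≤ 8)))
    exact hKc.exists_bound_of_continuousOn ((hcd.continuousOn).mono hKU)
  set Mx : ℕ → ℝ := fun n => if hn : n ≤ 8 then (hMall n hn).choose else 0 with hMxdef
  have hMx : ∀ n : ℕ, (hn : n ≤ 8) → ∀ p ∈ Set.Icc l₁ (l₁ + ρ) ×ˢ Set.Icc l₃ (l₃ + ρ),
      ‖px^[8 - n] (py^[n] u) p‖ ≤ Mx n := by
    intro n hn
    rw [hMxdef]; simp only [hn, dif_pos]
    exact (hMall n hn).choose_spec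
  refine ⟨∑ n ∈ Finset.range 9, max (Mx n) 0, by positivity, ?_⟩
  intro a b ha hb
  set s := max a b with hs
  have hs0 : 0 ≤ s := le_trans ha.1 (le_max_left a b)
  have hxm : l₁ + a ∈ Set.Icc l₁ (l₁ + ρ) := ⟨by linarith [ha.1], by linarith [ha.2]⟩
  have hym : l₃ + b ∈ Set.Icc l₃ (l₃ + ρ) := ⟨by linarith [hb.1], by linarith [hb.2]⟩
  -- inner Taylor in y at x = l₁ + a
  have hinner : ‖u (l₁ + a, l₃ + b) - ∑ k ∈ Finset.range 8,
      ((b : ℝ) ^ k / (k.factorial : ℝ)) • py^[k] u (l₁ + a, l₃)‖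
      ≤ Mx 8 * b ^ 8 / ((7 : ℕ).factorial : ℝ) := by
    have hO : IsOpen {t : ℝ | (l₁ + a, t) ∈ U} := hU.preimage (by fun_prop)
    have hsub : Set.Icc l₃ (l₃ + ρ) ⊆ {t : ℝ | (l₁ + a, t) ∈ U} :=
      fun y hy => hK (l₁ + a) y hxm hy
    have hf : ContDiffOn ℝ ((7 : ℕ) + 1) (fun t => u (l₁ + a, t)) {t : ℝ | (l₁ + a, t) ∈ U} := by
      have := contDiffOn_slice_y hu (l₁ + a)
      exact (by exact_mod_cast this : ContDiffOn ℝ ((7 : ℕ) + 1) _ _)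
    have hC : ∀ y ∈ Set.Icc l₃ (l₃ + ρ),
        ‖iteratedDeriv ((7 : ℕ) + 1) (fun t => u (l₁ + a, t)) y‖ ≤ Mx 8 := by
      intro y hy
      have := congrFun (py_iter_slice u 8 (l₁ + a)) y
      rw [show (7 : ℕ) + 1 = 8 from rfl, ← this]
      have h8 := hMx 8 le_rfl (l₁ + a, y) ⟨hxm, hy⟩
      simpa using h8
    have hT := taylor_bound hO hρ hsub hf hC (x := l₃ + b) hym
    have hbb : l₃ + b - l₃ = b := by ring
    rw [hbb] at hT
    have hsum : ∀ k ∈ Finset.range 8, (b ^ k / (k.factorial : ℝ)) •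
        iteratedDeriv k (fun t => u (l₁ + a, t)) l₃
        = (b ^ k / (k.factorial : ℝ)) • py^[k] u (l₁ + a, l₃) := by
      intro k _
      rw [← congrFun (py_iter_slice u k (l₁ + a)) l₃]
    rw [show (7:ℕ)+1 = 8 from rfl] at hT
    rw [Finset.sum_congr rfl hsum] at hT
    exact hT
  -- outer Taylor in x for each k < 8
  have houter : ∀ n : ℕ, n < 8 → ‖py^[n] u (l₁ + a, l₃) - ∑ m ∈ Finset.range ((7 - n) + 1),
      ((a : ℝ) ^ m / (m.factorial : ℝ)) • px^[m] (py^[n] u) (l₁, l₃)‖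
      ≤ Mx n * a ^ ((7 - n) + 1) / ((7 - n).factorial : ℝ) := by
    intro n hn
    have hO : IsOpen {x : ℝ | (x, l₃) ∈ U} := hU.preimage (by fun_prop)
    have hsub : Set.Icc l₁ (l₁ + ρ) ⊆ {x : ℝ | (x, l₃) ∈ U} :=
      fun x hx => hK x l₃ hx (Set.left_mem_Icc.2 (by linarith))
    have hcdu : ContDiffOn ℝ ((8 - n : ℕ)) (py^[n] u) U :=
      contDiffOn_py_iter hU n (hu.of_le (by exact_mod_cast (by omega : (8 - n) + n ≤ 8)))
    have e87 : (8 - n : ℕ) = (7 - n) + 1 := by omega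
    rw [e87] at hcdu
    have hf : ContDiffOn ℝ (((7 - n : ℕ)) + 1) (fun x => py^[n] u (x, l₃))
        {x : ℝ | (x, l₃) ∈ U} := by
      have := contDiffOn_slice_x hcdu l₃
      exact (by exact_mod_cast this : ContDiffOn ℝ (((7 - n : ℕ)) + 1) _ _)
    have hC : ∀ x ∈ Set.Icc l₁ (l₁ + ρ),
        ‖iteratedDeriv ((7 - n) + 1) (fun x => py^[n] u (x, l₃)) x‖ ≤ Mx n := by
      intro x hx
      rw [← congrFun (px_iter_slice (py^[n] u) ((7 - n) + 1) l₃) x]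
      have := hMx n (by omega) (x, l₃) ⟨hx, Set.left_mem_Icc.2 (by linarith)⟩
      rw [show (8 - n : ℕ) = (7 - n) + 1 from by omega] at this
      exact this
    have hT := taylor_bound hO hρ hsub hf hC (x := l₁ + a) hxm
    have haa : l₁ + a - l₁ = a := by ring
    rw [haa] at hT
    have hsum : ∀ m ∈ Finset.range ((7 - n) + 1), (a ^ m / (m.factorial : ℝ)) •
        iteratedDeriv m (fun x => py^[n] u (x, l₃)) l₁
        = (a ^ m / (m.factorial : ℝ)) • px^[m] (py^[n] u) (l₁, l₃) := by
      intro m _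
      rw [← congrFun (px_iter_slice (py^[n] u) m l₃) l₁]
    rw [Finset.sum_congr rfl hsum] at hT
    exact hT
  -- decomposition
  have hdecomp : u (l₁ + a, l₃ + b) - TPoly (fun m n => pd u m n l₁ l₃) a b
      = (u (l₁ + a, l₃ + b) - ∑ k ∈ Finset.range 8,
          ((b : ℝ) ^ k / (k.factorial : ℝ)) • py^[k] u (l₁ + a, l₃))
        + ∑ n ∈ Finset.range 8, ((b : ℝ) ^ n / (n.factorial : ℝ)) •
            (py^[n] u (l₁ + a, l₃) - ∑ m ∈ Finset.range ((7 - n) + 1),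
              ((a : ℝ) ^ m / (m.factorial : ℝ)) • px^[m] (py^[n] u) (l₁, l₃)) := by
    have hT : TPoly (fun m n => pd u m n l₁ l₃) a b
        = ∑ n ∈ Finset.range 8, ((b : ℝ) ^ n / (n.factorial : ℝ)) •
            (∑ m ∈ Finset.range ((7 - n) + 1),
              ((a : ℝ) ^ m / (m.factorial : ℝ)) • px^[m] (py^[n] u) (l₁, l₃)) := by
      unfold TPoly
      refine Finset.sum_congr rfl fun n hn => ?_
      rw [Finset.smul_sum]
      have hrange : (8 - n) = (7 - n) + 1 := by
        have := Finset.mem_range.1 hn; omega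
      rw [hrange]
      refine Finset.sum_congr rfl fun m _ => ?_
      have hbeta : (fun m n => pd u m n l₁ l₃) m n = pd u m n l₁ l₃ := rfl
      rw [hbeta, pd_eq_iter]
      rw [Complex.real_smul, Complex.real_smul]
      push_cast
      field_simp
    rw [hT]
    simp only [smul_sub, Finset.sum_sub_distrib]
    ring
  rw [hdecomp]
  -- estimates
  have hb0 : 0 ≤ b := hb.1
  have ha0 : 0 ≤ a := ha.1
  set Nx : ℕ → ℝ := fun n => max (Mx n) 0 with hNxdef
  have hNx0 : ∀ n, 0 ≤ Nx n := fun n => le_max_right _ _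
  have hMxNx : ∀ n, Mx n ≤ Nx n := fun n => le_max_left _ _
  have hterm : ∀ n ∈ Finset.range 8, ‖((b : ℝ) ^ n / (n.factorial : ℝ)) •
      (py^[n] u (l₁ + a, l₃) - ∑ m ∈ Finset.range ((7 - n) + 1),
        ((a : ℝ) ^ m / (m.factorial : ℝ)) • px^[m] (py^[n] u) (l₁, l₃))‖
      ≤ Nx n * s ^ 8 := by
    intro n hn
    have hn8 := Finset.mem_range.1 hn
    rw [norm_smul]
    have h1 : ‖(b : ℝ) ^ n / (n.factorial : ℝ)‖ = b ^ n / (n.factorial : ℝ) :=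
      Real.norm_of_nonneg (by positivity)
    rw [h1]
    have hfacpos : (0 : ℝ) < ((7 - n).factorial : ℝ) := by exact_mod_cast (7 - n).factorial_pos
    have hfac1 : (1 : ℝ) ≤ (n.factorial : ℝ) := by exact_mod_cast n.factorial_pos
    have hfac2 : (1 : ℝ) ≤ ((7 - n).factorial : ℝ) := by exact_mod_cast (7 - n).factorial_pos
    have hY : (0 : ℝ) ≤ a ^ ((7 - n) + 1) := pow_nonneg ha0 _
    have hbound2 : Mx n * a ^ ((7 - n) + 1) / ((7 - n).factorial : ℝ)
        ≤ Nx n * a ^ ((7 - n) + 1) / ((7 - n).factorial : ℝ) :=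
      (div_le_div_iff_of_pos_right hfacpos).2 (mul_le_mul_of_nonneg_right (hMxNx n) hY)
    have hnorm : ‖py^[n] u (l₁ + a, l₃) - ∑ m ∈ Finset.range ((7 - n) + 1),
        ((a : ℝ) ^ m / (m.factorial : ℝ)) • px^[m] (py^[n] u) (l₁, l₃)‖
        ≤ Nx n * a ^ ((7 - n) + 1) / ((7 - n).factorial : ℝ) :=
      le_trans (houter n hn8) hbound2
    have hpow : b ^ n * a ^ ((7 - n) + 1) ≤ s ^ 8 := by
      have hbn : b ^ n ≤ s ^ n := pow_le_pow_left₀ hb0 (le_max_right a b) n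
      have han : a ^ ((7 - n) + 1) ≤ s ^ ((7 - n) + 1) :=
        pow_le_pow_left₀ ha0 (le_max_left a b) _
      calc b ^ n * a ^ ((7 - n) + 1) ≤ s ^ n * s ^ ((7 - n) + 1) :=
            mul_le_mul hbn han (by positivity) (by positivity)
        _ = s ^ (n + ((7 - n) + 1)) := by rw [← pow_add]
        _ = s ^ 8 := by congr 1; omega
    calc b ^ n / (n.factorial : ℝ) * ‖py^[n] u (l₁ + a, l₃) - ∑ m ∈ Finset.range ((7 - n) + 1),
          ((a : ℝ) ^ m / (m.factorial : ℝ)) • px^[m] (py^[n] u) (l₁, l₃)‖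
        ≤ b ^ n / (n.factorial : ℝ) * (Nx n * a ^ ((7 - n) + 1) / ((7 - n).factorial : ℝ)) :=
          mul_le_mul_of_nonneg_left hnorm (by positivity)
      _ = Nx n * (b ^ n * a ^ ((7 - n) + 1)) / ((n.factorial : ℝ) * ((7 - n).factorial : ℝ)) := by
          ring
      _ ≤ Nx n * (s ^ 8) / ((n.factorial : ℝ) * ((7 - n).factorial : ℝ)) := by
          apply div_le_div_of_nonneg_right ?_ (by positivity)
          exact mul_le_mul_of_nonneg_left hpow (hNx0 n)
      _ ≤ Nx n * s ^ 8 / 1 := by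
          apply div_le_div_of_nonneg_left (by positivity) (by norm_num) ?_
          nlinarith
      _ = Nx n * s ^ 8 := by ring
  have h8 : Mx 8 * b ^ 8 / ((7 : ℕ).factorial : ℝ) ≤ Nx 8 * s ^ 8 := by
    have hfpos : (0 : ℝ) < ((7 : ℕ).factorial : ℝ) := by exact_mod_cast (7:ℕ).factorial_pos
    have hb8 : (0:ℝ) ≤ b ^ 8 := pow_nonneg hb0 8
    calc Mx 8 * b ^ 8 / ((7 : ℕ).factorial : ℝ)
        ≤ Nx 8 * b ^ 8 / ((7 : ℕ).factorial : ℝ) :=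
          (div_le_div_iff_of_pos_right hfpos).2 (mul_le_mul_of_nonneg_right (hMxNx 8) hb8)
      _ ≤ Nx 8 * b ^ 8 := div_le_self (by positivity) (by exact_mod_cast Nat.one_le_iff_ne_zero.2 (7:ℕ).factorial_ne_zero)
      _ ≤ Nx 8 * s ^ 8 :=
          mul_le_mul_of_nonneg_left (pow_le_pow_left₀ hb0 (le_max_right a b) 8) (hNx0 8)
  have heq : (∑ n ∈ Finset.range 9, Nx n) * s ^ 8
      = Nx 8 * s ^ 8 + ∑ n ∈ Finset.range 8, Nx n * s ^ 8 := by
    rw [Finset.sum_range_succ, add_mul, Finset.sum_mul]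
    ring
  have hfin := add_le_add hinner (Finset.sum_le_sum hterm)
  have htri : ‖(u (l₁ + a, l₃ + b) - ∑ k ∈ Finset.range 8,
          ((b : ℝ) ^ k / (k.factorial : ℝ)) • py^[k] u (l₁ + a, l₃))
        + ∑ n ∈ Finset.range 8, ((b : ℝ) ^ n / (n.factorial : ℝ)) •
            (py^[n] u (l₁ + a, l₃) - ∑ m ∈ Finset.range ((7 - n) + 1),
              ((a : ℝ) ^ m / (m.factorial : ℝ)) • px^[m] (py^[n] u) (l₁, l₃))‖
      ≤ ‖u (l₁ + a, l₃ + b) - ∑ k ∈ Finset.range 8,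
          ((b : ℝ) ^ k / (k.factorial : ℝ)) • py^[k] u (l₁ + a, l₃)‖
        + ∑ n ∈ Finset.range 8, ‖((b : ℝ) ^ n / (n.factorial : ℝ)) •
            (py^[n] u (l₁ + a, l₃) - ∑ m ∈ Finset.range ((7 - n) + 1),
              ((a : ℝ) ^ m / (m.factorial : ℝ)) • px^[m] (py^[n] u) (l₁, l₃))‖ :=
    le_trans (norm_add_le _ _) (by gcongr; exact norm_sum_le _ _)
  rw [heq]
  calc _ ≤ _ := htri
    _ ≤ Mx 8 * b ^ 8 / ((7 : ℕ).factorial : ℝ) + ∑ n ∈ Finset.range 8, Nx n * s ^ 8 := hfin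
    _ ≤ Nx 8 * s ^ 8 + ∑ n ∈ Finset.range 8, Nx n * s ^ 8 := by linarith

set_option maxHeartbeats 4000000 in
lemma key_alg (κ h : ℝ) (D F : ℕ → ℕ → ℂ) (G1 G3 : ℕ → ℂ)
    (hF : ∀ m n : ℕ, m + n ≤ 5 → F m n = D (m+2) n + D m (n+2) + (κ:ℂ)^2 * D m n)
    (hG1 : ∀ n : ℕ, n ≤ 6 → G1 n = -D 1 n - Complex.I * (κ:ℂ) * D 0 n)
    (hG3 : ∀ n : ℕ, n ≤ 6 → G3 n = -D n 1) :
    ∑ k ∈ Finset.range 2, ∑ l ∈ Finset.range 2,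
        cor1Coef (κ*h) k l * TPoly D ((k:ℝ)*h) ((l:ℝ)*h)
    = (h:ℂ) * ((∑ p ∈ Lam 6, F p.1 p.2 * Jf κ p.1 p.2 h)
        + (∑ n ∈ Finset.range 8, G1 n * Jg1d κ n h)
        + (∑ n ∈ Finset.range 8, G3 n * Jg3d κ n h))
      + (D 0 0 * Qq κ 0 h + D 0 2 * Qq κ 1 h + D 0 4 * Qq κ 2 h + D 0 6 * Qq κ 3 h) := by
  have e0_1 : D 0 1 = ((-1:ℂ)) * (G3 0) := by
    linear_combination hG3 0 (by norm_num)
  have e1_1 : D 1 1 = ((-1:ℂ)) * (G3 1) := by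
    linear_combination hG3 1 (by norm_num)
  have e2_1 : D 2 1 = ((-1:ℂ)) * (G3 2) := by
    linear_combination hG3 2 (by norm_num)
  have e3_1 : D 3 1 = ((-1:ℂ)) * (G3 3) := by
    linear_combination hG3 3 (by norm_num)
  have e4_1 : D 4 1 = ((-1:ℂ)) * (G3 4) := by
    linear_combination hG3 4 (by norm_num)
  have e5_1 : D 5 1 = ((-1:ℂ)) * (G3 5) := by
    linear_combination hG3 5 (by norm_num)
  have e6_1 : D 6 1 = ((-1:ℂ)) * (G3 6) := by
    linear_combination hG3 6 (by norm_num)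
  have e0_3 : D 0 3 = ((1:ℂ)) * (F 0 1) + ((1:ℂ) * (κ:ℂ)^2) * (G3 0) + ((1:ℂ)) * (G3 2) := by
    linear_combination -hF 0 1 (by norm_num) - e2_1 - (κ:ℂ)^2 * e0_1
  have e1_3 : D 1 3 = ((1:ℂ)) * (F 1 1) + ((1:ℂ) * (κ:ℂ)^2) * (G3 1) + ((1:ℂ)) * (G3 3) := by
    linear_combination -hF 1 1 (by norm_num) - e3_1 - (κ:ℂ)^2 * e1_1
  have e2_3 : D 2 3 = ((1:ℂ)) * (F 2 1) + ((1:ℂ) * (κ:ℂ)^2) * (G3 2) + ((1:ℂ)) * (G3 4) := by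
    linear_combination -hF 2 1 (by norm_num) - e4_1 - (κ:ℂ)^2 * e2_1
  have e3_3 : D 3 3 = ((1:ℂ)) * (F 3 1) + ((1:ℂ) * (κ:ℂ)^2) * (G3 3) + ((1:ℂ)) * (G3 5) := by
    linear_combination -hF 3 1 (by norm_num) - e5_1 - (κ:ℂ)^2 * e3_1
  have e4_3 : D 4 3 = ((1:ℂ)) * (F 4 1) + ((1:ℂ) * (κ:ℂ)^2) * (G3 4) + ((1:ℂ)) * (G3 6) := by
    linear_combination -hF 4 1 (by norm_num) - e6_1 - (κ:ℂ)^2 * e4_1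
  have e0_5 : D 0 5 = ((-1:ℂ) * (κ:ℂ)^2) * (F 0 1) + ((1:ℂ)) * (F 0 3) + ((-1:ℂ)) * (F 2 1) + ((-1:ℂ) * (κ:ℂ)^4) * (G3 0) + ((-2:ℂ) * (κ:ℂ)^2) * (G3 2) + ((-1:ℂ)) * (G3 4) := by
    linear_combination -hF 0 3 (by norm_num) - e2_3 - (κ:ℂ)^2 * e0_3
  have e1_5 : D 1 5 = ((-1:ℂ) * (κ:ℂ)^2) * (F 1 1) + ((1:ℂ)) * (F 1 3) + ((-1:ℂ)) * (F 3 1) + ((-1:ℂ) * (κ:ℂ)^4) * (G3 1) + ((-2:ℂ) * (κ:ℂ)^2) * (G3 3) + ((-1:ℂ)) * (G3 5) := by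
    linear_combination -hF 1 3 (by norm_num) - e3_3 - (κ:ℂ)^2 * e1_3
  have e2_5 : D 2 5 = ((-1:ℂ) * (κ:ℂ)^2) * (F 2 1) + ((1:ℂ)) * (F 2 3) + ((-1:ℂ)) * (F 4 1) + ((-1:ℂ) * (κ:ℂ)^4) * (G3 2) + ((-2:ℂ) * (κ:ℂ)^2) * (G3 4) + ((-1:ℂ)) * (G3 6) := by
    linear_combination -hF 2 3 (by norm_num) - e4_3 - (κ:ℂ)^2 * e2_3
  have e0_7 : D 0 7 = ((1:ℂ) * (κ:ℂ)^4) * (F 0 1) + ((-1:ℂ) * (κ:ℂ)^2) * (F 0 3) + ((1:ℂ)) * (F 0 5) + ((2:ℂ) * (κ:ℂ)^2) * (F 2 1) + ((-1:ℂ)) * (F 2 3) + ((1:ℂ)) * (F 4 1) + ((1:ℂ) * (κ:ℂ)^6) * (G3 0) + ((3:ℂ) * (κ:ℂ)^4) * (G3 2) + ((3:ℂ) * (κ:ℂ)^2) * (G3 4) + ((1:ℂ)) * (G3 6) := by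
    linear_combination -hF 0 5 (by norm_num) - e2_5 - (κ:ℂ)^2 * e0_5
  have e1_0 : D 1 0 = ((-1:ℂ) * Complex.I * (κ:ℂ)) * (D 0 0) + ((-1:ℂ)) * (G1 0) := by
    linear_combination hG1 0 (by norm_num)
  have e1_2 : D 1 2 = ((-1:ℂ) * Complex.I * (κ:ℂ)) * (D 0 2) + ((-1:ℂ)) * (G1 2) := by
    linear_combination hG1 2 (by norm_num)
  have e1_4 : D 1 4 = ((-1:ℂ) * Complex.I * (κ:ℂ)) * (D 0 4) + ((-1:ℂ)) * (G1 4) := by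
    linear_combination hG1 4 (by norm_num)
  have e1_6 : D 1 6 = ((-1:ℂ) * Complex.I * (κ:ℂ)) * (D 0 6) + ((-1:ℂ)) * (G1 6) := by
    linear_combination hG1 6 (by norm_num)
  have e2_0 : D 2 0 = ((-1:ℂ) * (κ:ℂ)^2) * (D 0 0) + ((-1:ℂ)) * (D 0 2) + ((1:ℂ)) * (F 0 0) := by
    linear_combination -hF 0 0 (by norm_num)
  have e2_2 : D 2 2 = ((-1:ℂ) * (κ:ℂ)^2) * (D 0 2) + ((-1:ℂ)) * (D 0 4) + ((1:ℂ)) * (F 0 2) := by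
    linear_combination -hF 0 2 (by norm_num)
  have e2_4 : D 2 4 = ((-1:ℂ) * (κ:ℂ)^2) * (D 0 4) + ((-1:ℂ)) * (D 0 6) + ((1:ℂ)) * (F 0 4) := by
    linear_combination -hF 0 4 (by norm_num)
  have e3_0 : D 3 0 = ((1:ℂ) * Complex.I * (κ:ℂ)^3) * (D 0 0) + ((1:ℂ) * Complex.I * (κ:ℂ)) * (D 0 2) + ((1:ℂ)) * (F 1 0) + ((1:ℂ) * (κ:ℂ)^2) * (G1 0) + ((1:ℂ)) * (G1 2) := by
    linear_combination -hF 1 0 (by norm_num) - e1_2 - (κ:ℂ)^2 * e1_0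
  have e3_2 : D 3 2 = ((1:ℂ) * Complex.I * (κ:ℂ)^3) * (D 0 2) + ((1:ℂ) * Complex.I * (κ:ℂ)) * (D 0 4) + ((1:ℂ)) * (F 1 2) + ((1:ℂ) * (κ:ℂ)^2) * (G1 2) + ((1:ℂ)) * (G1 4) := by
    linear_combination -hF 1 2 (by norm_num) - e1_4 - (κ:ℂ)^2 * e1_2
  have e3_4 : D 3 4 = ((1:ℂ) * Complex.I * (κ:ℂ)^3) * (D 0 4) + ((1:ℂ) * Complex.I * (κ:ℂ)) * (D 0 6) + ((1:ℂ)) * (F 1 4) + ((1:ℂ) * (κ:ℂ)^2) * (G1 4) + ((1:ℂ)) * (G1 6) := by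
    linear_combination -hF 1 4 (by norm_num) - e1_6 - (κ:ℂ)^2 * e1_4
  have e4_0 : D 4 0 = ((1:ℂ) * (κ:ℂ)^4) * (D 0 0) + ((2:ℂ) * (κ:ℂ)^2) * (D 0 2) + ((1:ℂ)) * (D 0 4) + ((-1:ℂ) * (κ:ℂ)^2) * (F 0 0) + ((-1:ℂ)) * (F 0 2) + ((1:ℂ)) * (F 2 0) := by
    linear_combination -hF 2 0 (by norm_num) - e2_2 - (κ:ℂ)^2 * e2_0
  have e4_2 : D 4 2 = ((1:ℂ) * (κ:ℂ)^4) * (D 0 2) + ((2:ℂ) * (κ:ℂ)^2) * (D 0 4) + ((1:ℂ)) * (D 0 6) + ((-1:ℂ) * (κ:ℂ)^2) * (F 0 2) + ((-1:ℂ)) * (F 0 4) + ((1:ℂ)) * (F 2 2) := by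
    linear_combination -hF 2 2 (by norm_num) - e2_4 - (κ:ℂ)^2 * e2_2
  have e5_0 : D 5 0 = ((-1:ℂ) * Complex.I * (κ:ℂ)^5) * (D 0 0) + ((-2:ℂ) * Complex.I * (κ:ℂ)^3) * (D 0 2) + ((-1:ℂ) * Complex.I * (κ:ℂ)) * (D 0 4) + ((-1:ℂ) * (κ:ℂ)^2) * (F 1 0) + ((-1:ℂ)) * (F 1 2) + ((1:ℂ)) * (F 3 0) + ((-1:ℂ) * (κ:ℂ)^4) * (G1 0) + ((-2:ℂ) * (κ:ℂ)^2) * (G1 2) + ((-1:ℂ)) * (G1 4) := by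
    linear_combination -hF 3 0 (by norm_num) - e3_2 - (κ:ℂ)^2 * e3_0
  have e5_2 : D 5 2 = ((-1:ℂ) * Complex.I * (κ:ℂ)^5) * (D 0 2) + ((-2:ℂ) * Complex.I * (κ:ℂ)^3) * (D 0 4) + ((-1:ℂ) * Complex.I * (κ:ℂ)) * (D 0 6) + ((-1:ℂ) * (κ:ℂ)^2) * (F 1 2) + ((-1:ℂ)) * (F 1 4) + ((1:ℂ)) * (F 3 2) + ((-1:ℂ) * (κ:ℂ)^4) * (G1 2) + ((-2:ℂ) * (κ:ℂ)^2) * (G1 4) + ((-1:ℂ)) * (G1 6) := by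
    linear_combination -hF 3 2 (by norm_num) - e3_4 - (κ:ℂ)^2 * e3_2
  have e6_0 : D 6 0 = ((-1:ℂ) * (κ:ℂ)^6) * (D 0 0) + ((-3:ℂ) * (κ:ℂ)^4) * (D 0 2) + ((-3:ℂ) * (κ:ℂ)^2) * (D 0 4) + ((-1:ℂ)) * (D 0 6) + ((1:ℂ) * (κ:ℂ)^4) * (F 0 0) + ((2:ℂ) * (κ:ℂ)^2) * (F 0 2) + ((1:ℂ)) * (F 0 4) + ((-1:ℂ) * (κ:ℂ)^2) * (F 2 0) + ((-1:ℂ)) * (F 2 2) + ((1:ℂ)) * (F 4 0) := by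
    linear_combination -hF 4 0 (by norm_num) - e4_2 - (κ:ℂ)^2 * e4_0
  have e7_0 : D 7 0 = ((1:ℂ) * Complex.I * (κ:ℂ)^7) * (D 0 0) + ((3:ℂ) * Complex.I * (κ:ℂ)^5) * (D 0 2) + ((3:ℂ) * Complex.I * (κ:ℂ)^3) * (D 0 4) + ((1:ℂ) * Complex.I * (κ:ℂ)) * (D 0 6) + ((1:ℂ) * (κ:ℂ)^4) * (F 1 0) + ((2:ℂ) * (κ:ℂ)^2) * (F 1 2) + ((1:ℂ)) * (F 1 4) + ((-1:ℂ) * (κ:ℂ)^2) * (F 3 0) + ((-1:ℂ)) * (F 3 2) + ((1:ℂ)) * (F 5 0) + ((1:ℂ) * (κ:ℂ)^6) * (G1 0) + ((3:ℂ) * (κ:ℂ)^4) * (G1 2) + ((3:ℂ) * (κ:ℂ)^2) * (G1 4) + ((1:ℂ)) * (G1 6) := by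
    linear_combination -hF 5 0 (by norm_num) - e5_2 - (κ:ℂ)^2 * e5_0
  have hLam : (Lam 6) = (Finset.range 7 ×ˢ Finset.range 7).filter (fun p => p.1 + p.2 ≤ 6) := rfl
  rw [hLam]
  simp only [TPoly, Finset.sum_filter, Finset.sum_product, Finset.sum_range_succ,
    Finset.sum_range_zero, cor1Coef, cor1C00, cor1C01, cor1C10, cor1C11,
    Jf, Jg1d, Jg3d, Qq, JfE0_0, JfE0_1, JfE0_2, JfE0_3, JfE0_4, JfE0_5, JfE1_0, JfE1_1, JfE1_2, JfE1_3, JfE1_4, JfE2_0, JfE2_1, JfE2_2, JfE2_3, JfE3_0, JfE3_1, JfE3_2, JfE4_0, JfE4_1, JfE5_0, Jg1dE0, Jg1dE2, Jg1dE4, Jg1dE6, Jg3dE0, Jg3dE1, Jg3dE2, Jg3dE3, Jg3dE4, Jg3dE5, Jg3dE6, QqE0, QqE1, QqE2, QqE3]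
  norm_num [Nat.factorial]
  rw [e0_1, e0_3, e0_5, e0_7, e1_0, e1_1, e1_2, e1_3, e1_4, e1_5, e1_6, e2_0, e2_1, e2_2, e2_3, e2_4, e2_5, e3_0, e3_1, e3_2, e3_3, e3_4, e4_0, e4_1, e4_2, e4_3, e5_0, e5_1, e5_2, e6_0, e6_1, e7_0]
  linear_combination ((((-14721/8192):ℂ) * (κ:ℂ)^2 * (h:ℂ)^2 + ((1089/4096):ℂ) * (κ:ℂ)^3 * (h:ℂ)^3 + ((43929/163840):ℂ) * (κ:ℂ)^4 * (h:ℂ)^4 + ((-753/16384):ℂ) * (κ:ℂ)^5 * (h:ℂ)^5 + ((-479/49152):ℂ) * (κ:ℂ)^6 * (h:ℂ)^6 + ((51/20480):ℂ) * (κ:ℂ)^7 * (h:ℂ)^7 + ((623/6553600):ℂ) * (κ:ℂ)^8 * (h:ℂ)^8 + ((-61/917504):ℂ) * (κ:ℂ)^9 * (h:ℂ)^9 + ((5141/825753600):ℂ) * (κ:ℂ)^10 * (h:ℂ)^10 + ((3/9175040):ℂ) * (κ:ℂ)^11 * (h:ℂ)^11) * (D 0 0) + (((-1/30):ℂ) *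 (κ:ℂ)^2 * (h:ℂ)^4 + ((7/1024):ℂ) * (κ:ℂ)^3 * (h:ℂ)^5 + ((78001/2949120):ℂ) * (κ:ℂ)^4 * (h:ℂ)^6 + ((-2989/983040):ℂ) * (κ:ℂ)^5 * (h:ℂ)^7 + ((-1781/1179648):ℂ) * (κ:ℂ)^6 * (h:ℂ)^8 + ((305/2752512):ℂ) * (κ:ℂ)^7 * (h:ℂ)^9 + ((-4729/275251200):ℂ) * (κ:ℂ)^8 * (h:ℂ)^10 + ((137/18350080):ℂ) * (κ:ℂ)^9 * (h:ℂ)^11) * (D 0 2) + (((18817/1474560):ℂ) * (κ:ℂ)^2 * (h:ℂ)^6 + ((-503/245760):ℂ) * (κ:ℂ)^3 * (h:ℂ)^7 + ((42857/176947200):ℂ) * (κ:ℂ)^4 * (h:ℂ)^8 + ((-1565/16515072):ℂ) * (κ:ℂ)^5 * (h:ℂ)^9 + ((617/91750400):ℂ) * (κ:ℂ)^6 * (h:ℂ)^10 + ((173/55050240):ℂ) * (κ:ℂ)^7 * (h:ℂ)^11) * (D 0 4) + (((56671/44236800):ℂ) * (κ:ℂ)^2 * (h:ℂ)^8 + ((-2011/10321920):ℂ)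 * (κ:ℂ)^3 * (h:ℂ)^9 + ((15011/825753600):ℂ) * (κ:ℂ)^4 * (h:ℂ)^10 + ((-101/55050240):ℂ) * (κ:ℂ)^5 * (h:ℂ)^11) * (D 0 6)) * Complex.I_sq


set_option maxHeartbeats 3200000

/-- Theorem 2.4: the 4-point corner stencil with the stated
coefficients achieves sixth consistency order at a lower-left corner `(l₁,l₃)`
with an impedance condition `-∂ₓu - iκu = g₁` on the left edge and a Neumann
condition `-∂_yu = g₃` on the bottom edge. -/
theorem statement12 (κ : ℝ) (hκ : 0 ≤ κ) :
    ∃ (J : ℕ → ℕ → ℝ → ℂ) (Jg1 Jg3 : ℕ → ℝ → ℂ),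
      ∀ (l₁ l₃ : ℝ) (U : Set (ℝ × ℝ)), IsOpen U → (l₁, l₃) ∈ U →
      ∀ u : ℝ × ℝ → ℂ, ContDiffOn ℝ 8 u U →
      ∀ (V : Set ℝ), IsOpen V → l₃ ∈ V →
      ∀ (W : Set ℝ), IsOpen W → l₁ ∈ W →
      ∀ g₁ g₃ : ℝ → ℂ, ContDiffOn ℝ 7 g₁ V → ContDiffOn ℝ 7 g₃ W →
      (∀ y ∈ V, -(pd u 1 0 l₁ y) - I * (κ : ℂ) * u (l₁, y) = g₁ y) →
      (∀ x ∈ W, -(pd u 0 1 x l₃) = g₃ x) →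
      ∃ C₀ δ : ℝ, 0 < C₀ ∧ 0 < δ ∧ ∀ h : ℝ, 0 < h → h < δ →
        norm
          ((h : ℂ)⁻¹ *
              ∑ k ∈ Finset.range 2, ∑ ℓ ∈ Finset.range 2,
                cor1Coef (κ * h) k ℓ * u (l₁ + (k : ℝ) * h, l₃ + (ℓ : ℝ) * h)
            - ∑ p ∈ Lam 6, pd (helm κ u) p.1 p.2 l₁ l₃ * J p.1 p.2 h
            - ∑ n ∈ Finset.range 8, iteratedDeriv n g₁ l₃ * Jg1 n h
            - ∑ n ∈ Finset.range 8, iteratedDeriv n g₃ l₁ * Jg3 n h)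
          ≤ C₀ * h ^ 6 := by
  refine ⟨fun m n h => Jf κ m n h, fun n h => Jg1d κ n h, fun n h => Jg3d κ n h, ?_⟩
  intro l₁ l₃ U hU hmemU u hu V hV hl₃V W hW hl₁W g₁ g₃ hg₁ hg₃ hbc1 hbc3
  obtain ⟨ε, hε, hball⟩ := Metric.isOpen_iff.1 hU (l₁, l₃) hmemU
  have hρ : 0 < ε / 2 := by positivity
  have hK : ∀ x y : ℝ, x ∈ Set.Icc l₁ (l₁ + ε / 2) → y ∈ Set.Icc l₃ (l₃ + ε / 2) →
      (x, y) ∈ U := by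
    intro x y hx hy
    apply hball
    rw [Metric.mem_ball, Prod.dist_eq]
    have h1 : dist x l₁ < ε := by
      rw [Real.dist_eq, _root_.abs_of_nonneg (by linarith [hx.1])]; linarith [hx.2]
    have h2 : dist y l₃ < ε := by
      rw [Real.dist_eq, _root_.abs_of_nonneg (by linarith [hy.1])]; linarith [hy.2]
    exact max_lt h1 h2
  obtain ⟨CT, hCT0, hCT⟩ := taylor2D hU hu hρ hK
  have hF : ∀ m n : ℕ, m + n ≤ 5 → pd (helm κ u) m n l₁ l₃
      = pd u (m + 2) n l₁ l₃ + pd u m (n + 2) l₁ l₃ + (κ : ℂ) ^ 2 * pd u m n l₁ l₃ :=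
    fun m n hmn => rel_F hU κ hu hmemU m n hmn
  have hG1 : ∀ n : ℕ, n ≤ 6 → iteratedDeriv n g₁ l₃
      = -pd u 1 n l₁ l₃ - Complex.I * (κ : ℂ) * pd u 0 n l₁ l₃ :=
    fun n hn => rel_G1 hU κ hu hV hmemU hl₃V hbc1 n hn
  have hG3 : ∀ n : ℕ, n ≤ 6 → iteratedDeriv n g₃ l₁ = -pd u n 1 l₁ l₃ :=
    fun n hn => rel_G3 hU hu hW hmemU hl₁W hbc3 n hn
  -- bounds for the stencil coefficients on h ∈ [0,1]
  have hc00 : ContinuousOn (fun t : ℝ => cor1C00 (κ * t)) (Set.Icc 0 1) := by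
    unfold cor1C00; fun_prop
  have hc01 : ContinuousOn (fun t : ℝ => cor1C01 (κ * t)) (Set.Icc 0 1) := by
    unfold cor1C01; fun_prop
  have hc10 : ContinuousOn (fun t : ℝ => cor1C10 (κ * t)) (Set.Icc 0 1) := by
    unfold cor1C10; fun_prop
  have hc11 : ContinuousOn (fun t : ℝ => cor1C11 (κ * t)) (Set.Icc 0 1) := by
    unfold cor1C11; fun_prop
  obtain ⟨B00, hB00⟩ := isCompact_Icc.exists_bound_of_continuousOn hc00
  obtain ⟨B01, hB01⟩ := isCompact_Icc.exists_bound_of_continuousOn hc01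
  obtain ⟨B10, hB10⟩ := isCompact_Icc.exists_bound_of_continuousOn hc10
  obtain ⟨B11, hB11⟩ := isCompact_Icc.exists_bound_of_continuousOn hc11
  have hB000 : 0 ≤ B00 := le_trans (norm_nonneg _) (hB00 0 (by norm_num))
  have hB010 : 0 ≤ B01 := le_trans (norm_nonneg _) (hB01 0 (by norm_num))
  have hB100 : 0 ≤ B10 := le_trans (norm_nonneg _) (hB10 0 (by norm_num))
  have hB110 : 0 ≤ B11 := le_trans (norm_nonneg _) (hB11 0 (by norm_num))
  -- bounds for the Q polynomials on h ∈ [0,1]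
  have hq0 : ContinuousOn (fun t : ℝ => Qpoly0 κ t) (Set.Icc 0 1) := by unfold Qpoly0; fun_prop
  have hq1 : ContinuousOn (fun t : ℝ => Qpoly1 κ t) (Set.Icc 0 1) := by unfold Qpoly1; fun_prop
  have hq2 : ContinuousOn (fun t : ℝ => Qpoly2 κ t) (Set.Icc 0 1) := by unfold Qpoly2; fun_prop
  have hq3 : ContinuousOn (fun t : ℝ => Qpoly3 κ t) (Set.Icc 0 1) := by unfold Qpoly3; fun_prop
  obtain ⟨M0, hM0⟩ := isCompact_Icc.exists_bound_of_continuousOn hq0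
  obtain ⟨M1, hM1⟩ := isCompact_Icc.exists_bound_of_continuousOn hq1
  obtain ⟨M2, hM2⟩ := isCompact_Icc.exists_bound_of_continuousOn hq2
  obtain ⟨M3, hM3⟩ := isCompact_Icc.exists_bound_of_continuousOn hq3
  have hM00 : 0 ≤ M0 := le_trans (norm_nonneg _) (hM0 0 (by norm_num))
  have hM10 : 0 ≤ M1 := le_trans (norm_nonneg _) (hM1 0 (by norm_num))
  have hM20 : 0 ≤ M2 := le_trans (norm_nonneg _) (hM2 0 (by norm_num))
  have hM30 : 0 ≤ M3 := le_trans (norm_nonneg _) (hM3 0 (by norm_num))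
  set CQ : ℝ := ‖pd u 0 0 l₁ l₃‖ * M0 + ‖pd u 0 2 l₁ l₃‖ * M1
      + ‖pd u 0 4 l₁ l₃‖ * M2 + ‖pd u 0 6 l₁ l₃‖ * M3 with hCQdef
  have hCQ0 : 0 ≤ CQ := by positivity
  set CB : ℝ := B00 + B01 + B10 + B11 with hCBdef
  have hCB0 : 0 ≤ CB := by rw [hCBdef]; linarith
  set C₀ : ℝ := CQ + 4 * CB * CT + 1 with hC₀def
  have hC₀pos : 0 < C₀ := by positivity
  refine ⟨C₀, min (ε / 2) 1, hC₀pos, lt_min hρ one_pos, ?_⟩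
  intro h h0 hδ
  have hh1 : h ≤ 1 := le_of_lt (lt_of_lt_of_le hδ (min_le_right _ _))
  have hhρ : h ≤ ε / 2 := le_of_lt (lt_of_lt_of_le hδ (min_le_left _ _))
  have hIcc : h ∈ Set.Icc (0 : ℝ) 1 := ⟨le_of_lt h0, hh1⟩
  have hne : (h : ℂ) ≠ 0 := by exact_mod_cast ne_of_gt h0
  -- Taylor residual bound
  have hR : ∀ k l : ℕ, k < 2 → l < 2 →
      ‖u (l₁ + (k : ℝ) * h, l₃ + (l : ℝ) * h)
        - TPoly (fun m n => pd u m n l₁ l₃) ((k : ℝ) * h) ((l : ℝ) * h)‖ ≤ CT * h ^ 8 := by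
    intro k l hk hl
    have hk1 : (k : ℝ) ≤ 1 := by exact_mod_cast Nat.lt_succ_iff.1 hk
    have hl1 : (l : ℝ) ≤ 1 := by exact_mod_cast Nat.lt_succ_iff.1 hl
    have hk0 : (0 : ℝ) ≤ (k : ℝ) := Nat.cast_nonneg k
    have hl0 : (0 : ℝ) ≤ (l : ℝ) := Nat.cast_nonneg l
    have hkh : (k : ℝ) * h ≤ h := by nlinarith
    have hlh : (l : ℝ) * h ≤ h := by nlinarith
    have ha : (k : ℝ) * h ∈ Set.Icc (0 : ℝ) (ε / 2) := ⟨by positivity, le_trans hkh hhρ⟩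
    have hb : (l : ℝ) * h ∈ Set.Icc (0 : ℝ) (ε / 2) := ⟨by positivity, le_trans hlh hhρ⟩
    have hmax : max ((k : ℝ) * h) ((l : ℝ) * h) ≤ h := max_le hkh hlh
    have hmax0 : (0 : ℝ) ≤ max ((k : ℝ) * h) ((l : ℝ) * h) :=
      le_trans (by positivity) (le_max_left _ _)
    calc ‖u (l₁ + (k : ℝ) * h, l₃ + (l : ℝ) * h)
          - TPoly (fun m n => pd u m n l₁ l₃) ((k : ℝ) * h) ((l : ℝ) * h)‖
        ≤ CT * (max ((k : ℝ) * h) ((l : ℝ) * h)) ^ 8 := hCT _ _ ha hb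
      _ ≤ CT * h ^ 8 :=
          mul_le_mul_of_nonneg_left (pow_le_pow_left₀ hmax0 hmax 8) hCT0
  -- key algebraic identity
  have hKA := key_alg κ h (fun m n => pd u m n l₁ l₃)
    (fun m n => pd (helm κ u) m n l₁ l₃)
    (fun n => iteratedDeriv n g₁ l₃) (fun n => iteratedDeriv n g₃ l₁) hF hG1 hG3
  have hsplit : (∑ k ∈ Finset.range 2, ∑ l ∈ Finset.range 2,
        cor1Coef (κ * h) k l * u (l₁ + (k : ℝ) * h, l₃ + (l : ℝ) * h))
      = (∑ k ∈ Finset.range 2, ∑ l ∈ Finset.range 2,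
          cor1Coef (κ * h) k l * TPoly (fun m n => pd u m n l₁ l₃) ((k : ℝ) * h) ((l : ℝ) * h))
        + (∑ k ∈ Finset.range 2, ∑ l ∈ Finset.range 2,
            cor1Coef (κ * h) k l * (u (l₁ + (k : ℝ) * h, l₃ + (l : ℝ) * h)
              - TPoly (fun m n => pd u m n l₁ l₃) ((k : ℝ) * h) ((l : ℝ) * h))) := by
    rw [← Finset.sum_add_distrib]
    refine Finset.sum_congr rfl fun k _ => ?_
    rw [← Finset.sum_add_distrib]
    refine Finset.sum_congr rfl fun l _ => ?_
    ring
  set RR : ℂ := ∑ k ∈ Finset.range 2, ∑ l ∈ Finset.range 2,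
      cor1Coef (κ * h) k l * (u (l₁ + (k : ℝ) * h, l₃ + (l : ℝ) * h)
        - TPoly (fun m n => pd u m n l₁ l₃) ((k : ℝ) * h) ((l : ℝ) * h)) with hRRdef
  set QQ : ℂ := pd u 0 0 l₁ l₃ * Qq κ 0 h + pd u 0 2 l₁ l₃ * Qq κ 1 h
      + pd u 0 4 l₁ l₃ * Qq κ 2 h + pd u 0 6 l₁ l₃ * Qq κ 3 h with hQQdef
  have hTOT : (∑ k ∈ Finset.range 2, ∑ l ∈ Finset.range 2,
        cor1Coef (κ * h) k l * u (l₁ + (k : ℝ) * h, l₃ + (l : ℝ) * h))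
      = (h : ℂ) * ((∑ p ∈ Lam 6, pd (helm κ u) p.1 p.2 l₁ l₃ * Jf κ p.1 p.2 h)
          + (∑ n ∈ Finset.range 8, iteratedDeriv n g₁ l₃ * Jg1d κ n h)
          + (∑ n ∈ Finset.range 8, iteratedDeriv n g₃ l₁ * Jg3d κ n h))
        + (QQ + RR) := by
    rw [hsplit, hKA, hQQdef, hRRdef]
    ring
  have hgoal : (h : ℂ)⁻¹ *
        (∑ k ∈ Finset.range 2, ∑ l ∈ Finset.range 2,
          cor1Coef (κ * h) k l * u (l₁ + (k : ℝ) * h, l₃ + (l : ℝ) * h))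
      - (∑ p ∈ Lam 6, pd (helm κ u) p.1 p.2 l₁ l₃ * Jf κ p.1 p.2 h)
      - (∑ n ∈ Finset.range 8, iteratedDeriv n g₁ l₃ * Jg1d κ n h)
      - (∑ n ∈ Finset.range 8, iteratedDeriv n g₃ l₁ * Jg3d κ n h)
      = (h : ℂ)⁻¹ * (QQ + RR) := by
    rw [hTOT]
    field_simp
    ring
  have hbeta : ((h : ℂ)⁻¹ *
        ∑ k ∈ Finset.range 2, ∑ ℓ ∈ Finset.range 2,
          cor1Coef (κ * h) k ℓ * u (l₁ + (k : ℝ) * h, l₃ + (ℓ : ℝ) * h)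
      - ∑ p ∈ Lam 6, pd (helm κ u) p.1 p.2 l₁ l₃ * (fun m n h => Jf κ m n h) p.1 p.2 h
      - ∑ n ∈ Finset.range 8, iteratedDeriv n g₁ l₃ * (fun n h => Jg1d κ n h) n h
      - ∑ n ∈ Finset.range 8, iteratedDeriv n g₃ l₁ * (fun n h => Jg3d κ n h) n h)
      = (h : ℂ)⁻¹ * (QQ + RR) := hgoal
  rw [hbeta]
  -- bound the Q part
  have hQle : ∀ j : ℕ, j < 4 → ∀ M : ℝ, (∀ t ∈ Set.Icc (0:ℝ) 1, ‖(fun t : ℝ => Qpoly0 κ t) t‖ ≤ M) → True := fun _ _ _ _ => trivial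
  have hQ0' : ‖Qq κ 0 h‖ ≤ M0 * h ^ 7 := by
    have he : Qq κ 0 h = QqE0 κ h := by simp [Qq]
    rw [he, Qq_fact0, norm_mul, norm_pow, Complex.norm_real, Real.norm_of_nonneg h0.le]
    calc h ^ 7 * ‖Qpoly0 κ h‖ ≤ h ^ 7 * M0 :=
          mul_le_mul_of_nonneg_left (hM0 h hIcc) (by positivity)
      _ = M0 * h ^ 7 := by ring
  have hQ1' : ‖Qq κ 1 h‖ ≤ M1 * h ^ 7 := by
    have he : Qq κ 1 h = QqE1 κ h := by simp [Qq]
    rw [he, Qq_fact1, norm_mul, norm_pow, Complex.norm_real, Real.norm_of_nonneg h0.le]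
    calc h ^ 7 * ‖Qpoly1 κ h‖ ≤ h ^ 7 * M1 :=
          mul_le_mul_of_nonneg_left (hM1 h hIcc) (by positivity)
      _ = M1 * h ^ 7 := by ring
  have hQ2' : ‖Qq κ 2 h‖ ≤ M2 * h ^ 7 := by
    have he : Qq κ 2 h = QqE2 κ h := by simp [Qq]
    rw [he, Qq_fact2, norm_mul, norm_pow, Complex.norm_real, Real.norm_of_nonneg h0.le]
    calc h ^ 7 * ‖Qpoly2 κ h‖ ≤ h ^ 7 * M2 :=
          mul_le_mul_of_nonneg_left (hM2 h hIcc) (by positivity)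
      _ = M2 * h ^ 7 := by ring
  have hQ3' : ‖Qq κ 3 h‖ ≤ M3 * h ^ 7 := by
    have he : Qq κ 3 h = QqE3 κ h := by simp [Qq]
    rw [he, Qq_fact3, norm_mul, norm_pow, Complex.norm_real, Real.norm_of_nonneg h0.le]
    calc h ^ 7 * ‖Qpoly3 κ h‖ ≤ h ^ 7 * M3 :=
          mul_le_mul_of_nonneg_left (hM3 h hIcc) (by positivity)
      _ = M3 * h ^ 7 := by ring
  have hQb : ‖QQ‖ ≤ CQ * h ^ 7 := by
    rw [hQQdef]
    have t1 : ‖pd u 0 0 l₁ l₃ * Qq κ 0 h + pd u 0 2 l₁ l₃ * Qq κ 1 h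
        + pd u 0 4 l₁ l₃ * Qq κ 2 h + pd u 0 6 l₁ l₃ * Qq κ 3 h‖
        ≤ ‖pd u 0 0 l₁ l₃ * Qq κ 0 h‖ + ‖pd u 0 2 l₁ l₃ * Qq κ 1 h‖
          + ‖pd u 0 4 l₁ l₃ * Qq κ 2 h‖ + ‖pd u 0 6 l₁ l₃ * Qq κ 3 h‖ := by
      refine le_trans (norm_add_le _ _) ?_
      refine add_le_add ?_ le_rfl
      refine le_trans (norm_add_le _ _) ?_
      exact add_le_add (norm_add_le _ _) le_rfl
    refine le_trans t1 ?_
    rw [hCQdef]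
    have e0 : ‖pd u 0 0 l₁ l₃ * Qq κ 0 h‖ ≤ ‖pd u 0 0 l₁ l₃‖ * (M0 * h ^ 7) := by
      rw [norm_mul]; exact mul_le_mul_of_nonneg_left hQ0' (norm_nonneg _)
    have e1 : ‖pd u 0 2 l₁ l₃ * Qq κ 1 h‖ ≤ ‖pd u 0 2 l₁ l₃‖ * (M1 * h ^ 7) := by
      rw [norm_mul]; exact mul_le_mul_of_nonneg_left hQ1' (norm_nonneg _)
    have e2 : ‖pd u 0 4 l₁ l₃ * Qq κ 2 h‖ ≤ ‖pd u 0 4 l₁ l₃‖ * (M2 * h ^ 7) := by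
      rw [norm_mul]; exact mul_le_mul_of_nonneg_left hQ2' (norm_nonneg _)
    have e3 : ‖pd u 0 6 l₁ l₃ * Qq κ 3 h‖ ≤ ‖pd u 0 6 l₁ l₃‖ * (M3 * h ^ 7) := by
      rw [norm_mul]; exact mul_le_mul_of_nonneg_left hQ3' (norm_nonneg _)
    nlinarith [e0, e1, e2, e3]
  -- bound the residual part
  have hcor : ∀ k l : ℕ, ‖cor1Coef (κ * h) k l‖ ≤ CB := by
    intro k l
    have b00 := hB00 h hIcc
    have b01 := hB01 h hIcc
    have b10 := hB10 h hIcc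
    have b11 := hB11 h hIcc
    simp only [cor1Coef]
    split_ifs
    · exact le_trans b00 (by rw [hCBdef]; linarith)
    · exact le_trans b01 (by rw [hCBdef]; linarith)
    · exact le_trans b10 (by rw [hCBdef]; linarith)
    · exact le_trans b11 (by rw [hCBdef]; linarith)
  have hRb : ‖RR‖ ≤ 4 * CB * (CT * h ^ 8) := by
    rw [hRRdef]
    calc ‖∑ k ∈ Finset.range 2, ∑ l ∈ Finset.range 2,
          cor1Coef (κ * h) k l * (u (l₁ + (k : ℝ) * h, l₃ + (l : ℝ) * h)
            - TPoly (fun m n => pd u m n l₁ l₃) ((k : ℝ) * h) ((l : ℝ) * h))‖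
        ≤ ∑ k ∈ Finset.range 2, ∑ l ∈ Finset.range 2,
            ‖cor1Coef (κ * h) k l * (u (l₁ + (k : ℝ) * h, l₃ + (l : ℝ) * h)
              - TPoly (fun m n => pd u m n l₁ l₃) ((k : ℝ) * h) ((l : ℝ) * h))‖ :=
          le_trans (norm_sum_le _ _) (Finset.sum_le_sum fun k _ => norm_sum_le _ _)
      _ ≤ ∑ k ∈ Finset.range 2, ∑ l ∈ Finset.range 2, CB * (CT * h ^ 8) := by
          refine Finset.sum_le_sum fun k hk => Finset.sum_le_sum fun l hl => ?_
          rw [norm_mul]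
          exact mul_le_mul (hcor k l) (hR k l (Finset.mem_range.1 hk) (Finset.mem_range.1 hl))
            (norm_nonneg _) hCB0
      _ = 4 * CB * (CT * h ^ 8) := by
          simp [Finset.sum_const, Finset.card_range]; ring
  -- final assembly
  have hnorm1 : ‖(h : ℂ)⁻¹ * (QQ + RR)‖ = h⁻¹ * ‖QQ + RR‖ := by
    rw [norm_mul, norm_inv, Complex.norm_real, Real.norm_of_nonneg h0.le]
  rw [hnorm1]
  have h87 : h ^ 8 ≤ h ^ 7 := pow_le_pow_of_le_one h0.le hh1 (by norm_num)
  have hsum : ‖QQ + RR‖ ≤ (CQ + 4 * CB * CT) * h ^ 7 := by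
    have := norm_add_le QQ RR
    have hRb' : 4 * CB * (CT * h ^ 8) ≤ 4 * CB * CT * h ^ 7 := by
      have : 4 * CB * (CT * h ^ 8) = 4 * CB * CT * h ^ 8 := by ring
      rw [this]
      exact mul_le_mul_of_nonneg_left h87 (by positivity)
    nlinarith [hQb, hRb]
  calc h⁻¹ * ‖QQ + RR‖ ≤ h⁻¹ * ((CQ + 4 * CB * CT) * h ^ 7) :=
        mul_le_mul_of_nonneg_left hsum (by positivity)
    _ = (CQ + 4 * CB * CT) * h ^ 6 := by
        field_simp
    _ ≤ C₀ * h ^ 6 := by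
        rw [hC₀def]
        have h6 : (0 : ℝ) ≤ h ^ 6 := by positivity
        nlinarith [h6]
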